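/- arXiv:1512.08548 — 4 statements merged into one kernel-verified Lean document; each statement's English description precedes it below -/
import Mathlib

section
/- Let 0<q<1 and let a, b be real numbers with 0<a<b. Write E = exp( [ Li₂(1−q^b) − Li₂(1−q^a) ] / log q ). Then [ ((1−q^b)/(1−q))^{b−1} / ((1−q^a)/(1−q))^{a−1} ] · E ≤ Γ_q(b)/Γ_q(a) ≤ [ ((1−q^b)/(1−q))^{b−1/2} / ((1−q^a)/(1−q))^{a−1/2} ] · E. -/
/-- The `q`-gamma function for `0 < q < 1`:
`Γ_q(x) = (1−q)^(1−x) ∏_{j=0}^∞ (1−q^(j+1))/(1−q^(j+x))`. -/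
noncomputable def qGamma (q x : ℝ) : ℝ :=
  (1 - q) ^ (1 - x) * ∏' j : ℕ, (1 - q ^ (j + 1)) / (1 - q ^ ((j : ℝ) + x))

/-- The dilogarithm `Li₂(z) = −∫₀^z log(1−t)/t dt`. -/
noncomputable def dilog (z : ℝ) : ℝ := -∫ t in (0:ℝ)..z, Real.log (1 - t) / t

open Real Filter MeasureTheory intervalIntegral

namespace QGAux

variable {q : ℝ}

lemma qx_pos (hq0 : 0 < q) (x : ℝ) : 0 < q ^ x := Real.rpow_pos_of_pos hq0 x

lemma qx_lt_one (hq0 : 0 < q) (hq1 : q < 1) {x : ℝ} (hx : 0 < x) : q ^ x < 1 :=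
  Real.rpow_lt_one hq0.le hq1 hx

/-- `t * (-log t) ≤ 1 - t` for `0 < t`. -/
lemma elem1 {t : ℝ} (ht : 0 < t) : t * (-Real.log t) ≤ 1 - t := by
  have h := Real.log_le_sub_one_of_pos (show (0:ℝ) < t⁻¹ by positivity)
  rw [Real.log_inv] at h
  have h2 : t * (-Real.log t) ≤ t * (t⁻¹ - 1) := by
    apply mul_le_mul_of_nonneg_left h ht.le
  calc t * (-Real.log t) ≤ t * (t⁻¹ - 1) := h2
    _ = 1 - t := by field_simp

/-- `2(1-t) ≤ (-log t)(1+t)` for `0 < t < 1`. -/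
lemma elem2 {t : ℝ} (ht0 : 0 < t) (ht1 : t < 1) : 2 * (1 - t) ≤ (-Real.log t) * (1 + t) := by
  set u : ℝ := (1 - t) / (1 + t) with hu
  have h1t : (0:ℝ) < 1 + t := by linarith
  have hu0 : 0 < u := div_pos (by linarith) h1t
  have hu1 : u < 1 := by rw [hu, div_lt_one h1t]; linarith
  have habs : |u| < 1 := by rw [abs_of_pos hu0]; exact hu1
  have habs' : |(-u)| < 1 := by rwa [abs_neg]
  have hp := Real.hasSum_pow_div_log_of_abs_lt_one habs
  have hm := Real.hasSum_pow_div_log_of_abs_lt_one habs'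
  -- hp : HasSum (fun n => u^(n+1)/(n+1)) (-log (1-u))
  -- hm : HasSum (fun n => (-u)^(n+1)/(n+1)) (-log (1+u))
  have hsub := hp.sub hm
  have hterm : ∀ n : ℕ, 0 ≤ u ^ (n+1) / (n+1) - (-u) ^ (n+1) / (n+1) := by
    intro n
    have : (-u) ^ (n+1) ≤ u ^ (n+1) := by
      calc (-u) ^ (n+1) ≤ |(-u) ^ (n+1)| := le_abs_self _
        _ = u ^ (n+1) := by rw [abs_pow, abs_neg, abs_of_pos hu0]
    have hn : (0:ℝ) < (n:ℝ) + 1 := by positivity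
    apply sub_nonneg.2
    exact div_le_div_of_nonneg_right this hn.le |>.trans_eq rfl
  have hfirst : (2:ℝ) * u ≤ -Real.log (1 - u) - -Real.log (1 - -u) := by
    have h0 : u ^ (0+1) / ((0:ℕ)+1 : ℝ) - (-u) ^ (0+1) / ((0:ℕ)+1 : ℝ) = 2 * u := by
      norm_num; ring
    calc (2:ℝ) * u = u ^ (0+1) / ((0:ℕ)+1 : ℝ) - (-u) ^ (0+1) / ((0:ℕ)+1 : ℝ) := h0.symm
      _ ≤ ∑' n : ℕ, (u ^ (n+1) / ((n:ℝ)+1) - (-u) ^ (n+1) / ((n:ℝ)+1)) := by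
          apply Summable.le_tsum hsub.summable 0
          intro n _
          exact hterm n
      _ = -Real.log (1 - u) - -Real.log (1 - -u) := hsub.tsum_eq
  have h1u : 1 - u = 2 * t / (1 + t) := by rw [hu]; field_simp; ring
  have h2u : 1 + u = 2 / (1 + t) := by rw [hu]; field_simp; ring
  have hlog : -Real.log (1 - u) - -Real.log (1 - -u) = -Real.log t := by
    rw [show (1:ℝ) - -u = 1 + u from by ring, h1u, h2u]
    rw [Real.log_div (by positivity) (by positivity), Real.log_div (by positivity) (by positivity),
      Real.log_mul (by norm_num) (by positivity)]
    ring
  rw [hlog] at hfirst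
  have := mul_le_mul_of_nonneg_right hfirst h1t.le
  calc 2 * (1 - t) = 2 * u * (1 + t) := by rw [hu]; field_simp
    _ ≤ (-Real.log t) * (1 + t) := this

lemma key1 {L m t : ℝ} (hm0 : 0 < m) (ht1 : t < 1) (he : t * (-(m * L)) ≤ 1 - t) :
    0 ≤ L / (1 - t) + 1 / m - 1 * L := by
  have h1t : (0:ℝ) < 1 - t := by linarith
  have heq : L / (1 - t) + 1 / m - 1 * L = (m * L * t + (1 - t)) / (m * (1 - t)) := by
    field_simp
    ring
  rw [heq]
  apply div_nonneg _ (mul_pos hm0 h1t).le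
  nlinarith

lemma key2 {L m t : ℝ} (hm0 : 0 < m) (ht1 : t < 1) (he : 2 * (1 - t) ≤ -(m * L) * (1 + t)) :
    L / (1 - t) + 1 / m - 1 / 2 * L ≤ 0 := by
  have h1t : (0:ℝ) < 1 - t := by linarith
  have heq : L / (1 - t) + 1 / m - 1 / 2 * L
      = (m * L * (1 + t) + 2 * (1 - t)) / (2 * m * (1 - t)) := by
    field_simp
    ring
  rw [heq]
  apply div_nonpos_of_nonpos_of_nonneg (by nlinarith) (by positivity)

/-- `-log(1-y) ≤ y/(1-y)` for `y < 1`. -/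
lemma neg_log_one_sub_le {y : ℝ} (hy1 : y < 1) : -Real.log (1 - y) ≤ y / (1 - y) := by
  have h1 : (0:ℝ) < 1 - y := by linarith
  have h := Real.log_le_sub_one_of_pos (show (0:ℝ) < (1-y)⁻¹ by positivity)
  rw [Real.log_inv] at h
  have : (1-y)⁻¹ - 1 = y / (1-y) := by field_simp; ring
  linarith [this ▸ h]

lemma neg_log_one_sub_nonneg {y : ℝ} (hy0 : 0 ≤ y) (hy1 : y < 1) : 0 ≤ -Real.log (1 - y) := by
  have : Real.log (1 - y) ≤ 0 := Real.log_nonpos (by linarith) (by linarith)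
  linarith

/-- Summability of `-log(1 - q^(j+x))`. -/
lemma summable_neg_log (hq0 : 0 < q) (hq1 : q < 1) {x : ℝ} (hx : 0 < x) :
    Summable (fun j : ℕ => -Real.log (1 - q ^ ((j:ℝ) + x))) := by
  have hgeo : Summable (fun j : ℕ => q ^ x / (1 - q ^ x) * q ^ j) :=
    (summable_geometric_of_lt_one hq0.le hq1).mul_left _
  apply Summable.of_nonneg_of_le _ _ hgeo
  · intro j
    exact neg_log_one_sub_nonneg (qx_pos hq0 _).le (qx_lt_one hq0 hq1 (by positivity))
  · intro j
    have hjx : (0:ℝ) < (j:ℝ) + x := by positivity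
    have hlt : q ^ ((j:ℝ) + x) < 1 := qx_lt_one hq0 hq1 hjx
    have hle : q ^ ((j:ℝ) + x) ≤ q ^ x := by
      rw [Real.rpow_add hq0, Real.rpow_natCast]
      calc q ^ (j:ℕ) * q ^ x ≤ 1 * q ^ x := by
            apply mul_le_mul_of_nonneg_right _ (qx_pos hq0 x).le
            exact pow_le_one₀ hq0.le hq1.le
        _ = q ^ x := one_mul _
    calc -Real.log (1 - q ^ ((j:ℝ) + x)) ≤ q ^ ((j:ℝ)+x) / (1 - q ^ ((j:ℝ)+x)) :=
          neg_log_one_sub_le hlt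
      _ ≤ q ^ ((j:ℝ)+x) / (1 - q ^ x) := by
          apply div_le_div_of_nonneg_left (qx_pos hq0 _).le (by linarith [qx_lt_one hq0 hq1 hx])
          linarith
      _ = q ^ x / (1 - q ^ x) * q ^ j := by
          rw [Real.rpow_add hq0, Real.rpow_natCast]; ring

lemma summable_log (hq0 : 0 < q) (hq1 : q < 1) {x : ℝ} (hx : 0 < x) :
    Summable (fun j : ℕ => Real.log (1 - q ^ ((j:ℝ) + x))) := by
  simpa using (summable_neg_log hq0 hq1 hx).neg

/-- The series `T q x = ∑ log(1 - q^(j+x))`. -/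
noncomputable def T (q x : ℝ) : ℝ := ∑' j : ℕ, Real.log (1 - q ^ ((j:ℝ) + x))

/-- From a HasSum of logs, get a HasProd. -/
lemma hasProd_of_hasSum_log {f : ℕ → ℝ} {S : ℝ} (hf : ∀ j, 0 < f j)
    (h : HasSum (fun j => Real.log (f j)) S) : HasProd f (Real.exp S) := by
  have := (Real.continuous_exp.tendsto S).comp h
  rw [HasProd]
  convert this using 1
  funext s
  simp only [Function.comp_apply, Real.exp_sum]
  exact Finset.prod_congr rfl (fun i _ => (Real.exp_log (hf i)).symm)

lemma qGamma_eq (hq0 : 0 < q) (hq1 : q < 1) {x : ℝ} (hx : 0 < x) :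
    qGamma q x = (1 - q) ^ (1 - x) * Real.exp (T q 1 - T q x) := by
  unfold qGamma
  congr 1
  have hpos : ∀ j : ℕ, (0:ℝ) < (1 - q ^ (j + 1)) / (1 - q ^ ((j : ℝ) + x)) := by
    intro j
    apply div_pos
    · have : q ^ (j+1) < 1 := pow_lt_one₀ hq0.le hq1 (Nat.succ_ne_zero j)
      linarith
    · have := qx_lt_one hq0 hq1 (show (0:ℝ) < (j:ℝ) + x by positivity)
      linarith
  have hcast : ∀ j : ℕ, (q : ℝ) ^ (j + 1) = q ^ ((j:ℝ) + 1) := by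
    intro j
    rw [show ((j:ℝ) + 1) = ((j + 1 : ℕ) : ℝ) by push_cast; ring, Real.rpow_natCast]
  have hsum : HasSum (fun j : ℕ => Real.log ((1 - q ^ (j + 1)) / (1 - q ^ ((j : ℝ) + x))))
      (T q 1 - T q x) := by
    have h1 : HasSum (fun j : ℕ => Real.log (1 - q ^ ((j:ℝ) + 1))) (T q 1) :=
      (summable_log hq0 hq1 one_pos).hasSum
    have h2 : HasSum (fun j : ℕ => Real.log (1 - q ^ ((j:ℝ) + x))) (T q x) :=
      (summable_log hq0 hq1 hx).hasSum
    have := h1.sub h2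
    convert this using 2 with j
    · rfl
    rw [Real.log_div _ _]
    · rw [hcast j]
    · have : q ^ (j+1) < 1 := pow_lt_one₀ hq0.le hq1 (Nat.succ_ne_zero j)
      linarith [this]
    · have := qx_lt_one hq0 hq1 (show (0:ℝ) < (j:ℝ) + x by positivity)
      intro hc; linarith [this, sub_eq_zero.mp hc]
  exact (hasProd_of_hasSum_log hpos hsum).tprod_eq

lemma qGamma_pos (hq0 : 0 < q) (hq1 : q < 1) {x : ℝ} (hx : 0 < x) : 0 < qGamma q x := by
  rw [qGamma_eq hq0 hq1 hx]
  have h1q : (0:ℝ) < 1 - q := by linarith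
  positivity

lemma log_qGamma (hq0 : 0 < q) (hq1 : q < 1) {x : ℝ} (hx : 0 < x) :
    Real.log (qGamma q x) = (1 - x) * Real.log (1 - q) + (T q 1 - T q x) := by
  rw [qGamma_eq hq0 hq1 hx]
  have h1q : (0:ℝ) < 1 - q := by linarith
  rw [Real.log_mul (by positivity) (Real.exp_ne_zero _), Real.log_rpow h1q, Real.log_exp]

/-- deriv of `y ↦ q ^ ((j:ℝ) + y)`. -/
lemma hasDerivAt_qpow_shift (hq0 : 0 < q) (j x : ℝ) :
    HasDerivAt (fun y => q ^ (j + y)) (q ^ (j + x) * Real.log q) x := by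
  have h1 : HasDerivAt (fun y : ℝ => j + y) 1 x := (hasDerivAt_id x).const_add j
  have h2 := (Real.hasStrictDerivAt_const_rpow hq0 (j + x)).hasDerivAt
  have := h2.comp x h1
  rw [mul_one] at this
  exact this

lemma hasDerivAt_log_one_sub_qpow (hq0 : 0 < q) (hq1 : q < 1) (j : ℝ) {x : ℝ}
    (hjx : 0 < j + x) :
    HasDerivAt (fun y => Real.log (1 - q ^ (j + y)))
      (-(q ^ (j + x) * Real.log q) / (1 - q ^ (j + x))) x := by
  have h1 : HasDerivAt (fun y => 1 - q ^ (j + y)) (-(q ^ (j + x) * Real.log q)) x :=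
    (hasDerivAt_qpow_shift hq0 j x).const_sub 1
  apply h1.log
  have := qx_lt_one hq0 hq1 hjx
  intro hc; linarith [sub_eq_zero.mp hc]

lemma hasDerivAt_T (hq0 : 0 < q) (hq1 : q < 1) {x : ℝ} (hx : 0 < x) :
    HasDerivAt (T q)
      (∑' j : ℕ, -(q ^ ((j:ℝ) + x) * Real.log q) / (1 - q ^ ((j:ℝ) + x))) x := by
  set s : Set ℝ := Set.Ioi (x/2) with hs
  have hs_open : IsOpen s := isOpen_Ioi
  have hs_conn : IsPreconnected s := (convex_Ioi _).isPreconnected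
  have hx2 : 0 < x/2 := by linarith
  have hxs : x ∈ s := by simp [hs]; linarith
  set u : ℕ → ℝ := fun j => |Real.log q| * (q ^ (x/2) / (1 - q ^ (x/2))) * q ^ j with hu
  have hu_sum : Summable u :=
    ((summable_geometric_of_lt_one hq0.le hq1).mul_left _)
  apply hasDerivAt_tsum_of_isPreconnected hu_sum hs_open hs_conn
    (fun j y hy => hasDerivAt_log_one_sub_qpow hq0 hq1 (j:ℝ)
       (by simp only [hs, Set.mem_Ioi] at hy
           have : (0:ℝ) ≤ (j:ℝ) := Nat.cast_nonneg j
           linarith))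
    _ hxs (summable_log hq0 hq1 hx) hxs
  intro j y hy
  simp only [hs, Set.mem_Ioi] at hy
  have hjy : (0:ℝ) < (j:ℝ) + y := by
    have : (0:ℝ) ≤ (j:ℝ) := Nat.cast_nonneg j
    linarith
  have hlt : q ^ ((j:ℝ) + y) < 1 := qx_lt_one hq0 hq1 hjy
  have hle2 : q ^ ((j:ℝ) + y) ≤ q ^ (x/2) :=
    Real.rpow_le_rpow_of_exponent_ge hq0 hq1.le (by
      have : (0:ℝ) ≤ (j:ℝ) := Nat.cast_nonneg j
      linarith)
  have hle3 : q ^ ((j:ℝ) + y) ≤ q ^ ((j:ℝ) + x/2) :=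
    Real.rpow_le_rpow_of_exponent_ge hq0 hq1.le (by linarith)
  have h12 : (0:ℝ) < 1 - q ^ (x/2) := by linarith [qx_lt_one hq0 hq1 hx2]
  have h1y : (0:ℝ) < 1 - q ^ ((j:ℝ) + y) := by linarith
  rw [Real.norm_eq_abs, abs_div, abs_neg, abs_mul, abs_of_pos (qx_pos hq0 _),
    abs_of_pos h1y]
  calc q ^ ((j:ℝ) + y) * |Real.log q| / (1 - q ^ ((j:ℝ) + y))
      ≤ q ^ ((j:ℝ) + x/2) * |Real.log q| / (1 - q ^ (x/2)) := by
        apply div_le_div₀ (by positivity) _ h12 (by linarith)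
        exact mul_le_mul_of_nonneg_right hle3 (abs_nonneg _)
    _ = u j := by
        rw [hu]
        rw [Real.rpow_add hq0, Real.rpow_natCast]
        ring

/-- Geometric series in the form `y/(1-y)`. -/
lemma hasSum_geom_div {y : ℝ} (hy0 : 0 ≤ y) (hy1 : y < 1) :
    HasSum (fun n : ℕ => y ^ (n + 1)) (y / (1 - y)) := by
  have h := (hasSum_geometric_of_lt_one hy0 hy1).mul_left y
  rw [← div_eq_mul_inv] at h
  convert h using 2 with n
  · rfl
  rw [pow_succ, mul_comm]

lemma cast_rpow_pow (hq0 : 0 < q) (x : ℝ) (j n : ℕ) :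
    (q ^ ((j:ℝ) + x)) ^ (n + 1) = (q ^ x) ^ (n + 1) * (q ^ (n + 1)) ^ j := by
  rw [← Real.rpow_natCast (q ^ ((j:ℝ)+x)) (n+1), ← Real.rpow_natCast (q ^ x) (n+1),
    ← Real.rpow_mul hq0.le, ← Real.rpow_natCast (q ^ (n+1)) j,
    ← Real.rpow_natCast q (n+1), ← Real.rpow_mul hq0.le, ← Real.rpow_mul hq0.le,
    ← Real.rpow_add hq0]
  congr 1
  push_cast
  ring

/-- Swap the double geometric sum. -/
lemma hasSum_geom_swap (hq0 : 0 < q) (hq1 : q < 1) {x : ℝ} (hx : 0 < x) :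
    HasSum (fun n : ℕ => (q ^ x) ^ (n + 1) / (1 - q ^ (n + 1)))
      (∑' j : ℕ, q ^ ((j:ℝ) + x) / (1 - q ^ ((j:ℝ) + x))) := by
  set G : ℕ → ℕ → ℝ := fun j n => (q ^ ((j:ℝ) + x)) ^ (n + 1) with hG
  have hjx : ∀ j : ℕ, (0:ℝ) < (j:ℝ) + x := fun j => by
    have : (0:ℝ) ≤ (j:ℝ) := Nat.cast_nonneg j
    linarith
  have hrow : ∀ j : ℕ, HasSum (fun n => G j n) (q ^ ((j:ℝ)+x) / (1 - q ^ ((j:ℝ)+x))) :=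
    fun j => hasSum_geom_div (qx_pos hq0 _).le (qx_lt_one hq0 hq1 (hjx j))
  have hqn1 : ∀ n : ℕ, q ^ (n+1) < 1 := fun n => pow_lt_one₀ hq0.le hq1 (Nat.succ_ne_zero n)
  have hqn0 : ∀ n : ℕ, (0:ℝ) < q ^ (n+1) := fun n => pow_pos hq0 _
  have hcol : ∀ n : ℕ, HasSum (fun j => G j n) ((q ^ x) ^ (n+1) / (1 - q ^ (n+1))) := by
    intro n
    have hgeo : HasSum (fun j : ℕ => (q ^ (n+1) : ℝ) ^ j) (1 - q ^ (n+1))⁻¹ :=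
      hasSum_geometric_of_lt_one (hqn0 n).le (hqn1 n)
    have := hgeo.mul_left ((q ^ x) ^ (n+1))
    rw [← div_eq_mul_inv] at this
    convert this using 2 with j
    · rfl
    rw [hG]
    exact cast_rpow_pow hq0 x j n
  -- summability of the uncurried family
  have hGnn : ∀ p : ℕ × ℕ, 0 ≤ (fun p : ℕ × ℕ => G p.1 p.2) p := by
    intro p
    exact pow_nonneg (qx_pos hq0 _).le _
  have hrowsum : Summable (fun j : ℕ => ∑' n : ℕ, G j n) := by
    have heq : (fun j : ℕ => ∑' n : ℕ, G j n)
        = fun j : ℕ => q ^ ((j:ℝ)+x) / (1 - q ^ ((j:ℝ)+x)) := by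
      funext j; exact (hrow j).tsum_eq
    rw [heq]
    have hgeo : Summable (fun j : ℕ => q ^ x / (1 - q ^ x) * q ^ j) :=
      (summable_geometric_of_lt_one hq0.le hq1).mul_left _
    apply Summable.of_nonneg_of_le _ _ hgeo
    · intro j
      have := qx_lt_one hq0 hq1 (hjx j)
      exact div_nonneg (qx_pos hq0 _).le (by linarith)
    · intro j
      have hlt := qx_lt_one hq0 hq1 (hjx j)
      have hxlt := qx_lt_one hq0 hq1 hx
      have hle : q ^ ((j:ℝ) + x) ≤ q ^ x := by
        rw [Real.rpow_add hq0, Real.rpow_natCast]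
        calc q ^ (j:ℕ) * q ^ x ≤ 1 * q ^ x := by
              apply mul_le_mul_of_nonneg_right _ (qx_pos hq0 x).le
              exact pow_le_one₀ hq0.le hq1.le
          _ = q ^ x := one_mul _
      calc q ^ ((j:ℝ)+x) / (1 - q ^ ((j:ℝ)+x)) ≤ q ^ ((j:ℝ)+x) / (1 - q ^ x) := by
            apply div_le_div_of_nonneg_left (qx_pos hq0 _).le (by linarith) (by linarith)
        _ = q ^ x / (1 - q ^ x) * q ^ j := by
            rw [Real.rpow_add hq0, Real.rpow_natCast]; ring
  have hGsum : Summable (fun p : ℕ × ℕ => G p.1 p.2) := by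
    rw [summable_prod_of_nonneg hGnn]
    exact ⟨fun j => (hrow j).summable, hrowsum⟩
  have hcolsum : Summable (fun n : ℕ => (q ^ x) ^ (n+1) / (1 - q ^ (n+1))) := by
    have h1q : (0:ℝ) < 1 - q := by linarith
    have hgeo : Summable (fun n : ℕ => (q ^ x : ℝ) ^ (n+1) * (1 - q)⁻¹) :=
      (((summable_geometric_of_lt_one (qx_pos hq0 x).le
        (qx_lt_one hq0 hq1 hx)).mul_left (q ^ x)).congr
          (fun n => by rw [pow_succ, mul_comm])).mul_right _
    apply Summable.of_nonneg_of_le _ _ hgeo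
    · intro n
      have := hqn1 n
      exact div_nonneg (pow_nonneg (qx_pos hq0 x).le _) (by linarith)
    · intro n
      rw [div_eq_mul_inv]
      apply mul_le_mul_of_nonneg_left _ (pow_nonneg (qx_pos hq0 x).le _)
      apply inv_anti₀ h1q
      have : q ^ (n+1) ≤ q := by
        calc q ^ (n+1) = q ^ n * q := pow_succ q n
          _ ≤ 1 * q := by
              apply mul_le_mul_of_nonneg_right _ hq0.le
              exact pow_le_one₀ hq0.le hq1.le
          _ = q := one_mul q
      linarith
  rw [Summable.hasSum_iff hcolsum]
  calc ∑' n : ℕ, (q ^ x) ^ (n+1) / (1 - q ^ (n+1))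
      = ∑' n : ℕ, ∑' j : ℕ, G j n := by
        apply tsum_congr; intro n; exact (hcol n).tsum_eq.symm
    _ = ∑' j : ℕ, ∑' n : ℕ, G j n := Summable.tsum_comm (f := G) hGsum
    _ = ∑' j : ℕ, q ^ ((j:ℝ)+x) / (1 - q ^ ((j:ℝ)+x)) := by
        apply tsum_congr; intro j; exact (hrow j).tsum_eq

/-- The derivative of `Φ_c`. -/
noncomputable def phi (q c x : ℝ) : ℝ :=
  Real.log q * (∑' j : ℕ, q ^ ((j:ℝ) + x) / (1 - q ^ ((j:ℝ) + x)))
    - Real.log (1 - q ^ x) - c * Real.log q * (q ^ x / (1 - q ^ x))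

lemma hasSum_phi (hq0 : 0 < q) (hq1 : q < 1) (c : ℝ) {x : ℝ} (hx : 0 < x) :
    HasSum (fun n : ℕ => (q ^ x) ^ (n + 1) *
        (Real.log q / (1 - q ^ (n + 1)) + 1 / ((n:ℝ) + 1) - c * Real.log q))
      (phi q c x) := by
  have hy0 : (0:ℝ) ≤ q ^ x := (qx_pos hq0 x).le
  have hy1 : q ^ x < 1 := qx_lt_one hq0 hq1 hx
  have habs : |q ^ x| < 1 := by rw [abs_of_nonneg hy0]; exact hy1
  have h1 := (hasSum_geom_swap hq0 hq1 hx).mul_left (Real.log q)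
  have h2 := Real.hasSum_pow_div_log_of_abs_lt_one habs
  have h3 := (hasSum_geom_div hy0 hy1).mul_left (c * Real.log q)
  have h := (h1.add h2).sub h3
  have hval : phi q c x = Real.log q * (∑' j : ℕ, q ^ ((j:ℝ) + x) / (1 - q ^ ((j:ℝ) + x)))
      + -Real.log (1 - q ^ x) - c * Real.log q * (q ^ x / (1 - q ^ x)) := by
    unfold phi; ring
  rw [hval]
  convert h using 1
  · rfl
  funext n
  ring

lemma phi_one_nonneg (hq0 : 0 < q) (hq1 : q < 1) {x : ℝ} (hx : 0 < x) :
    0 ≤ phi q 1 x := by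
  have h := hasSum_phi hq0 hq1 1 hx
  apply h.nonneg
  intro n
  set m : ℝ := (n:ℝ) + 1 with hm
  have hm0 : (0:ℝ) < m := by positivity
  set t : ℝ := q ^ (n+1) with ht
  have ht0 : (0:ℝ) < t := pow_pos hq0 _
  have ht1 : t < 1 := pow_lt_one₀ hq0.le hq1 (Nat.succ_ne_zero n)
  have hlog : Real.log t = m * Real.log q := by
    rw [ht, Real.log_pow]; rw [hm]; push_cast; ring
  have he1 := elem1 ht0
  rw [hlog] at he1
  -- he1 : t * (-(m * log q)) ≤ 1 - t
  apply mul_nonneg (pow_nonneg (qx_pos hq0 x).le _)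
  exact key1 hm0 ht1 he1

lemma phi_half_nonpos (hq0 : 0 < q) (hq1 : q < 1) {x : ℝ} (hx : 0 < x) :
    phi q (1/2) x ≤ 0 := by
  have h := hasSum_phi hq0 hq1 (1/2) hx
  apply h.nonpos
  intro n
  set m : ℝ := (n:ℝ) + 1 with hm
  have hm0 : (0:ℝ) < m := by positivity
  set t : ℝ := q ^ (n+1) with ht
  have ht0 : (0:ℝ) < t := pow_pos hq0 _
  have ht1 : t < 1 := pow_lt_one₀ hq0.le hq1 (Nat.succ_ne_zero n)
  have hlog : Real.log t = m * Real.log q := by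
    rw [ht, Real.log_pow]; rw [hm]; push_cast; ring
  have he2 := elem2 ht0 ht1
  rw [hlog] at he2
  -- he2 : 2 * (1 - t) ≤ -(m * log q) * (1 + t)
  apply mul_nonpos_iff.mpr
  left
  exact ⟨pow_nonneg (qx_pos hq0 x).le _, key2 hm0 ht1 he2⟩

/-- monotone bound for the dilog integrand. -/
lemma integrand_bound {t z : ℝ} (ht0 : 0 < t) (htz : t ≤ z) (hz1 : z < 1) :
    -Real.log (1 - t) / t ≤ -Real.log (1 - z) / z := by
  have hz0 : 0 < z := lt_of_lt_of_le ht0 htz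
  have ht1 : t < 1 := lt_of_le_of_lt htz hz1
  have habs_t : |t| < 1 := by rw [abs_of_pos ht0]; exact ht1
  have habs_z : |z| < 1 := by rw [abs_of_pos hz0]; exact hz1
  have hht := (Real.hasSum_pow_div_log_of_abs_lt_one habs_t).div_const t
  have hhz := (Real.hasSum_pow_div_log_of_abs_lt_one habs_z).div_const z
  have het : ∀ n : ℕ, t ^ (n+1) / ((n:ℝ)+1) / t = t ^ n / ((n:ℝ)+1) := by
    intro n; rw [div_div, pow_succ, mul_comm ((n:ℝ)+1) t, ← div_div,
      mul_div_assoc, div_self ht0.ne', mul_one]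
  have hez : ∀ n : ℕ, z ^ (n+1) / ((n:ℝ)+1) / z = z ^ n / ((n:ℝ)+1) := by
    intro n; rw [div_div, pow_succ, mul_comm ((n:ℝ)+1) z, ← div_div,
      mul_div_assoc, div_self hz0.ne', mul_one]
  have hht' : HasSum (fun n : ℕ => t ^ n / ((n:ℝ)+1)) (-Real.log (1 - t) / t) :=
    hht.congr_fun (fun n => (het n).symm)
  have hhz' : HasSum (fun n : ℕ => z ^ n / ((n:ℝ)+1)) (-Real.log (1 - z) / z) :=
    hhz.congr_fun (fun n => (hez n).symm)
  apply hasSum_le _ hht' hhz'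
  intro n
  apply div_le_div_of_nonneg_right (pow_le_pow_left₀ ht0.le htz n) (by positivity)

lemma intervalIntegrable_dilog {z : ℝ} (hz0 : 0 ≤ z) (hz1 : z < 1) :
    IntervalIntegrable (fun t => Real.log (1 - t) / t) volume 0 z := by
  rw [intervalIntegrable_iff_integrableOn_Ioc_of_le hz0]
  apply Measure.integrableOn_of_bounded (M := -Real.log (1 - z) / z)
  · exact (measure_Ioc_lt_top).ne
  · apply Measurable.aestronglyMeasurable
    exact (Real.measurable_log.comp (measurable_const.sub measurable_id)).div measurable_id
  · rw [ae_restrict_iff' measurableSet_Ioc]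
    apply Filter.Eventually.of_forall
    intro t ht
    simp only [Set.mem_Ioc] at ht
    have ht1 : t < 1 := lt_of_le_of_lt ht.2 hz1
    have hlog : Real.log (1 - t) ≤ 0 := Real.log_nonpos (by linarith) (by linarith)
    rw [Real.norm_eq_abs, abs_div, abs_of_pos ht.1, abs_of_nonpos hlog]
    exact integrand_bound ht.1 ht.2 hz1

lemma hasDerivAt_dilog {z : ℝ} (hz0 : 0 < z) (hz1 : z < 1) :
    HasDerivAt dilog (-(Real.log (1 - z) / z)) z := by
  have hcont : ContinuousOn (fun t : ℝ => Real.log (1 - t) / t) (Set.Ioo 0 1) := by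
    apply ContinuousOn.div
    · apply ContinuousOn.log (by fun_prop)
      intro t ht
      simp only [Set.mem_Ioo] at ht
      intro hc; linarith [sub_eq_zero.mp hc]
    · fun_prop
    · intro t ht
      simp only [Set.mem_Ioo] at ht
      exact ht.1.ne'
  have hmem : Set.Ioo (0:ℝ) 1 ∈ nhds z := isOpen_Ioo.mem_nhds ⟨hz0, hz1⟩
  have h := integral_hasDerivAt_right (intervalIntegrable_dilog hz0.le hz1)
    (hcont.stronglyMeasurableAtFilter isOpen_Ioo z ⟨hz0, hz1⟩)
    (hcont.continuousAt hmem)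
  exact h.neg

/-- The comparison function. -/
noncomputable def Phi (q c x : ℝ) : ℝ :=
  (1 - x) * Real.log (1 - q) + (T q 1 - T q x)
    - (x - c) * (Real.log (1 - q ^ x) - Real.log (1 - q))
    - dilog (1 - q ^ x) / Real.log q

lemma hasDerivAt_Phi (hq0 : 0 < q) (hq1 : q < 1) (c : ℝ) {x : ℝ} (hx : 0 < x) :
    HasDerivAt (Phi q c) (phi q c x) x := by
  have hL : Real.log q < 0 := Real.log_neg hq0 hq1
  have hqx1 : q ^ x < 1 := qx_lt_one hq0 hq1 hx
  have hqx0 : 0 < q ^ x := qx_pos hq0 x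
  have h1qx : (0:ℝ) < 1 - q ^ x := by linarith
  have h1 : HasDerivAt (fun y : ℝ => (1 - y) * Real.log (1 - q)) (-Real.log (1 - q)) x := by
    have := ((hasDerivAt_id x).const_sub 1).mul_const (Real.log (1 - q))
    convert this using 1
    · rfl
    · rfl
    · rfl
    ring
  have h3 := hasDerivAt_T hq0 hq1 hx
  have h3' := (hasDerivAt_const x (T q 1)).sub h3
  have hqy : HasDerivAt (fun y : ℝ => q ^ y) (q ^ x * Real.log q) x :=
    (Real.hasStrictDerivAt_const_rpow hq0 x).hasDerivAt
  have h5 : HasDerivAt (fun y : ℝ => Real.log (1 - q ^ y) - Real.log (1 - q))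
      (-(q ^ x * Real.log q) / (1 - q ^ x)) x :=
    ((hqy.const_sub 1).log h1qx.ne').sub_const (Real.log (1 - q))
  have h4 : HasDerivAt (fun y : ℝ => y - c) 1 x := (hasDerivAt_id x).sub_const c
  have h6 := h4.mul h5
  have hz1 : 1 - q ^ x < 1 := by linarith
  have hdl := hasDerivAt_dilog h1qx hz1
  have hinner : HasDerivAt (fun y : ℝ => 1 - q ^ y) (-(q ^ x * Real.log q)) x :=
    hqy.const_sub 1
  have h7 := (hdl.comp x hinner).div_const (Real.log q)
  have combo := ((h1.add h3').sub h6).sub h7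
  have hDeq : (∑' j : ℕ, -(q ^ ((j:ℝ)+x) * Real.log q) / (1 - q ^ ((j:ℝ)+x)))
      = (-Real.log q) * ∑' j : ℕ, q ^ ((j:ℝ)+x) / (1 - q ^ ((j:ℝ)+x)) := by
    rw [← tsum_mul_left]
    exact tsum_congr (fun j => by ring)
  have hΦ : (Phi q c) = fun y => ((1 - y) * Real.log (1 - q) + (T q 1 - T q y))
      - (y - c) * (Real.log (1 - q ^ y) - Real.log (1 - q))
      - (dilog ∘ fun y : ℝ => 1 - q ^ y) y / Real.log q := by
    funext y
    simp [Phi, Function.comp]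
  have hval : phi q c x = -Real.log (1 - q)
      + (0 - ∑' j : ℕ, -(q ^ ((j:ℝ)+x) * Real.log q) / (1 - q ^ ((j:ℝ)+x)))
      - (1 * (Real.log (1 - q ^ x) - Real.log (1 - q))
          + (x - c) * (-(q ^ x * Real.log q) / (1 - q ^ x)))
      - -(Real.log (1 - (1 - q ^ x)) / (1 - q ^ x)) * -(q ^ x * Real.log q) / Real.log q := by
    rw [hDeq, show (1:ℝ) - (1 - q ^ x) = q ^ x by ring, Real.log_rpow hq0]
    unfold phi
    set S := ∑' j : ℕ, q ^ ((j:ℝ)+x) / (1 - q ^ ((j:ℝ)+x)) with hS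
    have hLne : Real.log q ≠ 0 := hL.ne
    have hxne : (1 - q ^ x) ≠ 0 := h1qx.ne'
    field_simp
    ring
  rw [hΦ, hval]
  exact combo

lemma Phi_mono (hq0 : 0 < q) (hq1 : q < 1) : MonotoneOn (Phi q 1) (Set.Ioi 0) := by
  apply monotoneOn_of_deriv_nonneg (convex_Ioi 0)
  · intro x hx
    exact (hasDerivAt_Phi hq0 hq1 1 hx).continuousAt.continuousWithinAt
  · intro x hx
    rw [interior_Ioi] at hx
    exact (hasDerivAt_Phi hq0 hq1 1 hx).differentiableAt.differentiableWithinAt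
  · intro x hx
    rw [interior_Ioi] at hx
    rw [(hasDerivAt_Phi hq0 hq1 1 hx).deriv]
    exact phi_one_nonneg hq0 hq1 hx

lemma Phi_anti (hq0 : 0 < q) (hq1 : q < 1) : AntitoneOn (Phi q (1/2)) (Set.Ioi 0) := by
  apply antitoneOn_of_deriv_nonpos (convex_Ioi 0)
  · intro x hx
    exact (hasDerivAt_Phi hq0 hq1 (1/2) hx).continuousAt.continuousWithinAt
  · intro x hx
    rw [interior_Ioi] at hx
    exact (hasDerivAt_Phi hq0 hq1 (1/2) hx).differentiableAt.differentiableWithinAt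
  · intro x hx
    rw [interior_Ioi] at hx
    rw [(hasDerivAt_Phi hq0 hq1 (1/2) hx).deriv]
    exact phi_half_nonpos hq0 hq1 hx

end QGAux

/-- For `0 < q < 1` and `0 < a < b`, with `E = exp((Li₂(1−q^b) − Li₂(1−q^a))/log q)`,
`[((1−q^b)/(1−q))^(b−1) / ((1−q^a)/(1−q))^(a−1)]·E ≤ Γ_q(b)/Γ_q(a)
≤ [((1−q^b)/(1−q))^(b−1/2) / ((1−q^a)/(1−q))^(a−1/2)]·E`. -/
theorem qGamma_ratio_bounds (q a b : ℝ) (hq0 : 0 < q) (hq1 : q < 1)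
    (ha : 0 < a) (hab : a < b) :
    ((1 - q ^ b) / (1 - q)) ^ (b - 1) / ((1 - q ^ a) / (1 - q)) ^ (a - 1) *
        Real.exp ((dilog (1 - q ^ b) - dilog (1 - q ^ a)) / Real.log q)
      ≤ qGamma q b / qGamma q a ∧
    qGamma q b / qGamma q a
      ≤ ((1 - q ^ b) / (1 - q)) ^ (b - 1 / 2) / ((1 - q ^ a) / (1 - q)) ^ (a - 1 / 2) *
        Real.exp ((dilog (1 - q ^ b) - dilog (1 - q ^ a)) / Real.log q) := by
  have hb : 0 < b := ha.trans hab
  have hL : Real.log q < 0 := Real.log_neg hq0 hq1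
  have h1q : (0:ℝ) < 1 - q := by linarith
  have hqa1 : q ^ a < 1 := QGAux.qx_lt_one hq0 hq1 ha
  have hqb1 : q ^ b < 1 := QGAux.qx_lt_one hq0 hq1 hb
  have h1qa : (0:ℝ) < 1 - q ^ a := by linarith
  have h1qb : (0:ℝ) < 1 - q ^ b := by linarith
  have hla : Real.log ((1 - q ^ a) / (1 - q)) = Real.log (1 - q ^ a) - Real.log (1 - q) :=
    Real.log_div h1qa.ne' h1q.ne'
  have hlb : Real.log ((1 - q ^ b) / (1 - q)) = Real.log (1 - q ^ b) - Real.log (1 - q) :=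
    Real.log_div h1qb.ne' h1q.ne'
  have hΓa := QGAux.log_qGamma hq0 hq1 ha
  have hΓb := QGAux.log_qGamma hq0 hq1 hb
  have hΓapos := QGAux.qGamma_pos hq0 hq1 ha
  have hΓbpos := QGAux.qGamma_pos hq0 hq1 hb
  have hratio : qGamma q b / qGamma q a
      = Real.exp (Real.log (qGamma q b) - Real.log (qGamma q a)) := by
    rw [Real.exp_sub, Real.exp_log hΓbpos, Real.exp_log hΓapos]
  have hmemb : b ∈ Set.Ioi (0:ℝ) := hb
  have hmema : a ∈ Set.Ioi (0:ℝ) := ha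
  constructor
  · have hmono := QGAux.Phi_mono hq0 hq1 hmema hmemb hab.le
    rw [hratio]
    have hlhs : ((1 - q ^ b) / (1 - q)) ^ (b - 1) / ((1 - q ^ a) / (1 - q)) ^ (a - 1) *
        Real.exp ((dilog (1 - q ^ b) - dilog (1 - q ^ a)) / Real.log q)
        = Real.exp (Real.log ((1 - q ^ b) / (1 - q)) * (b - 1)
            - Real.log ((1 - q ^ a) / (1 - q)) * (a - 1)
            + (dilog (1 - q ^ b) - dilog (1 - q ^ a)) / Real.log q) := by
      rw [Real.rpow_def_of_pos (div_pos h1qb h1q), Real.rpow_def_of_pos (div_pos h1qa h1q),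
        ← Real.exp_sub, ← Real.exp_add]
    rw [hlhs]
    apply Real.exp_le_exp.mpr
    unfold QGAux.Phi at hmono
    rw [hΓa, hΓb, hla, hlb, sub_div]
    nlinarith [hmono]
  · have hanti := QGAux.Phi_anti hq0 hq1 hmema hmemb hab.le
    rw [hratio]
    have hlhs : ((1 - q ^ b) / (1 - q)) ^ (b - 1/2) / ((1 - q ^ a) / (1 - q)) ^ (a - 1/2) *
        Real.exp ((dilog (1 - q ^ b) - dilog (1 - q ^ a)) / Real.log q)
        = Real.exp (Real.log ((1 - q ^ b) / (1 - q)) * (b - 1/2)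
            - Real.log ((1 - q ^ a) / (1 - q)) * (a - 1/2)
            + (dilog (1 - q ^ b) - dilog (1 - q ^ a)) / Real.log q) := by
      rw [Real.rpow_def_of_pos (div_pos h1qb h1q), Real.rpow_def_of_pos (div_pos h1qa h1q),
        ← Real.exp_sub, ← Real.exp_add]
    rw [hlhs]
    apply Real.exp_le_exp.mpr
    unfold QGAux.Phi at hanti
    rw [hΓa, hΓb, hla, hlb, sub_div]
    nlinarith [hanti]
end

section
/- Let 0<q<1 and x≥1. Write E = exp( −Li₂(1−q)/log q ) · exp( Li₂(1−q^x)/log q ). Then ((1−q^x)/(1−q))^{x} · E ≤ Γ_q(x+1) ≤ ((1−q^x)/(1−q))^{x+1/2} · E. -/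
open intervalIntegral Real Set Filter Topology

namespace QG

noncomputable def F (q t : ℝ) : ℝ := Real.log (1 - q ^ t)
noncomputable def F1 (q t : ℝ) : ℝ := -Real.log q * (q ^ t / (1 - q ^ t))

variable {q : ℝ} (hq0 : 0 < q) (hq1 : q < 1)

section Basic
include hq0 hq1
set_option linter.unusedSectionVars false

lemma rpos (t : ℝ) : 0 < q ^ t := Real.rpow_pos_of_pos hq0 t

lemma rlt1 {t : ℝ} (ht : 0 < t) : q ^ t < 1 := Real.rpow_lt_one hq0.le hq1 ht

lemma one_sub_pos {t : ℝ} (ht : 0 < t) : 0 < 1 - q ^ t := by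
  have := rlt1 hq0 hq1 ht; linarith

lemma rpow_antitone {s t : ℝ} (h : s ≤ t) : q ^ t ≤ q ^ s :=
  Real.rpow_le_rpow_of_exponent_ge hq0 hq1.le h

lemma F_neg {t : ℝ} (ht : 0 < t) : F q t < 0 := by
  have h1 := rpos hq0 hq1 t; have h2 := rlt1 hq0 hq1 ht
  exact Real.log_neg (by linarith) (by linarith)

lemma F_mono {s t : ℝ} (hs : 0 < s) (h : s ≤ t) : F q s ≤ F q t := by
  have h1 := rpos hq0 hq1 t
  have := rpow_antitone hq0 hq1 h
  exact Real.log_le_log (by have := one_sub_pos hq0 hq1 hs; linarith) (by linarith)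

lemma F1_pos {t : ℝ} (ht : 0 < t) : 0 < F1 q t := by
  have h1 := rpos hq0 hq1 t; have h2 := one_sub_pos hq0 hq1 ht
  have h3 : Real.log q < 0 := Real.log_neg hq0 hq1
  have hd : 0 < q ^ t / (1 - q ^ t) := div_pos h1 h2
  have : 0 < -Real.log q := by linarith
  exact mul_pos this hd

lemma F1_antitone {s t : ℝ} (hs : 0 < s) (h : s ≤ t) : F1 q t ≤ F1 q s := by
  have ht : 0 < t := lt_of_lt_of_le hs h
  have h1 := rpos hq0 hq1 t; have h2 := one_sub_pos hq0 hq1 ht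
  have h3 := rpos hq0 hq1 s; have h4 := one_sub_pos hq0 hq1 hs
  have h5 : Real.log q < 0 := Real.log_neg hq0 hq1
  have h6 := rpow_antitone hq0 hq1 h
  have hdiv : q ^ t / (1 - q ^ t) ≤ q ^ s / (1 - q ^ s) := by
    rw [div_le_div_iff₀ h2 h4]; nlinarith
  unfold F1
  have : 0 ≤ -Real.log q := by linarith
  exact mul_le_mul_of_nonneg_left hdiv this

lemma hasDerivAt_F {t : ℝ} (ht : 0 < t) : HasDerivAt (F q) (F1 q t) t := by
  have h1 : HasDerivAt (fun s : ℝ => q ^ s) (q ^ t * Real.log q) t :=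
    (Real.hasStrictDerivAt_const_rpow hq0 t).hasDerivAt
  have h2 : HasDerivAt (fun s : ℝ => 1 - q ^ s) (-(q ^ t * Real.log q)) t := h1.const_sub 1
  have h3 := h2.log (ne_of_gt (one_sub_pos hq0 hq1 ht))
  convert h3 using 1
  · rfl
  unfold F1; field_simp

lemma continuous_rpow_base : Continuous (fun t : ℝ => q ^ t) :=
  continuous_iff_continuousAt.mpr fun _ => Real.continuousAt_const_rpow hq0.ne'

lemma contOn_F {s : Set ℝ} (hs : s ⊆ Set.Ioi 0) : ContinuousOn (F q) s := fun t ht => by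
  exact ((hasDerivAt_F hq0 hq1 (hs ht)).continuousAt).continuousWithinAt

lemma contOn_F1 {s : Set ℝ} (hs : s ⊆ Set.Ioi 0) : ContinuousOn (F1 q) s := by
  apply ContinuousOn.mul continuousOn_const
  apply ContinuousOn.div ((continuous_rpow_base hq0 hq1).continuousOn)
    (continuousOn_const.sub (continuous_rpow_base hq0 hq1).continuousOn)
  exact fun t ht => ne_of_gt (one_sub_pos hq0 hq1 (hs ht))

lemma II_F {a b : ℝ} (ha : 0 < a) (hb : 0 < b) : IntervalIntegrable (F q) MeasureTheory.volume a b := by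
  apply (contOn_F hq0 hq1 ?_).intervalIntegrable
  intro t ht
  rcases Set.mem_uIcc.mp ht with h | h
  · exact lt_of_lt_of_le ha h.1
  · exact lt_of_lt_of_le hb h.1

lemma II_F1 {a b : ℝ} (ha : 0 < a) (hb : 0 < b) : IntervalIntegrable (F1 q) MeasureTheory.volume a b := by
  apply (contOn_F1 hq0 hq1 ?_).intervalIntegrable
  intro t ht
  rcases Set.mem_uIcc.mp ht with h | h
  · exact lt_of_lt_of_le ha h.1
  · exact lt_of_lt_of_le hb h.1

lemma integral_F1 {a b : ℝ} (ha : 0 < a) (hb : 0 < b) :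
    ∫ t in a..b, F1 q t = F q b - F q a := by
  apply intervalIntegral.integral_eq_sub_of_hasDerivAt
  · intro t ht
    apply hasDerivAt_F hq0 hq1
    rcases Set.mem_uIcc.mp ht with h | h
    · exact lt_of_lt_of_le ha h.1
    · exact lt_of_lt_of_le hb h.1
  · exact II_F1 hq0 hq1 ha hb


lemma neglog_le {u : ℝ} (h0 : 0 ≤ u) (h1 : u < 1) : -Real.log (1 - u) ≤ u / (1 - u) := by
  have hpos : 0 < 1 - u := by linarith
  have h := Real.log_le_sub_one_of_pos (show 0 < (1-u)⁻¹ by positivity)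
  rw [Real.log_inv] at h
  have : (1-u)⁻¹ - 1 = u / (1-u) := by field_simp; ring
  linarith

lemma negF_le {t : ℝ} (ht : 1 ≤ t) : -F q t ≤ (1/(1-q)) * q ^ t := by
  have h0 : (0:ℝ) < t := by linarith
  have h1 := rpos hq0 hq1 t
  have h2 := rlt1 hq0 hq1 h0
  have h3 := neglog_le hq0 hq1 (u := q ^ t) h1.le h2
  have h4 : q ^ t ≤ q := by simpa using rpow_antitone hq0 hq1 ht
  have h5 : q ^ t / (1 - q ^ t) ≤ q ^ t / (1 - q) := by
    apply div_le_div_of_nonneg_left h1.le (by linarith) (by linarith)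
  unfold F
  calc -Real.log (1 - q^t) ≤ q^t/(1-q^t) := h3
    _ ≤ q^t/(1-q) := h5
    _ = 1/(1-q) * q^t := by ring

lemma tendsto_qpow (c : ℝ) : Tendsto (fun n : ℕ => q ^ ((n:ℝ)+c)) atTop (𝓝 0) := by
  have : (fun n : ℕ => q ^ ((n:ℝ)+c)) = fun n : ℕ => q ^ (n:ℕ) * q ^ c := by
    funext n
    rw [Real.rpow_add hq0, Real.rpow_natCast]
  rw [this]
  simpa using (tendsto_pow_atTop_nhds_zero_of_lt_one hq0.le hq1).mul_const (q ^ c)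

lemma tendsto_F (c : ℝ) : Tendsto (fun n : ℕ => F q ((n:ℝ)+c)) atTop (𝓝 0) := by
  have hlog : Tendsto (fun u : ℝ => Real.log (1 - u)) (𝓝 0) (𝓝 0) := by
    have hc : ContinuousAt (fun u : ℝ => Real.log (1 - u)) 0 := by
      apply ContinuousAt.comp (x := (0:ℝ)) (g := Real.log)
      · simpa using Real.continuousAt_log (by norm_num : (1:ℝ) - 0 ≠ 0)
      · exact continuousAt_const.sub continuousAt_id
    simpa using hc.tendsto
  exact hlog.comp (tendsto_qpow hq0 hq1 c)

lemma summable_qpow (c : ℝ) : Summable (fun k : ℕ => q ^ ((k:ℝ)+c)) := by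
  have : (fun k : ℕ => q ^ ((k:ℝ)+c)) = fun k : ℕ => q ^ c * q ^ (k:ℕ) := by
    funext k; rw [Real.rpow_add hq0, Real.rpow_natCast, mul_comm]
  rw [this]
  exact (summable_geometric_of_lt_one hq0.le hq1).mul_left _

lemma summable_negF (c : ℝ) (hc : 1 ≤ c) : Summable (fun k : ℕ => -F q ((k:ℝ)+c)) := by
  apply Summable.of_nonneg_of_le (fun k => ?_) (fun k => ?_)
    (((summable_qpow hq0 hq1 c).mul_left (1/(1-q))))
  · have : F q ((k:ℝ)+c) < 0 := F_neg hq0 hq1 (by positivity)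
    linarith
  · exact negF_le hq0 hq1 (by have := Nat.cast_nonneg (α := ℝ) k; linarith)

end Basic


section Chord
include hq0 hq1
set_option linter.unusedSectionVars false

lemma F1_series {s : ℝ} (hs : 0 < s) :
    F1 q s = -Real.log q * ∑' n : ℕ, (q ^ s) ^ (n+1) := by
  unfold F1
  congr 1
  have hu0 : (0:ℝ) ≤ q ^ s := (rpos hq0 hq1 s).le
  have hu1 : q ^ s < 1 := rlt1 hq0 hq1 hs
  have : (fun n : ℕ => (q^s)^(n+1)) = fun n : ℕ => (q^s)^n * q^s := by
    funext n; rw [pow_succ]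
  rw [this, tsum_mul_right, tsum_geometric_of_lt_one hu0 hu1]
  rw [div_eq_mul_inv, mul_comm]

lemma summable_pow_succ {u : ℝ} (h0 : 0 ≤ u) (h1 : u < 1) :
    Summable (fun n : ℕ => u ^ (n+1)) := by
  have : (fun n : ℕ => u^(n+1)) = fun n : ℕ => u^n * u := by
    funext n; rw [pow_succ]
  rw [this]
  exact (summable_geometric_of_lt_one h0 h1).mul_right u

lemma chord {a t : ℝ} (ha : 0 < a) (ht : t ∈ Set.Icc a (a+1)) :
    F1 q t ≤ F1 q a + (t - a) * (F1 q (a+1) - F1 q a) := by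
  obtain ⟨ht1, ht2⟩ := ht
  set l : ℝ := t - a with hl
  have hl0 : 0 ≤ l := by simp [hl]; linarith
  have hl1 : l ≤ 1 := by simp [hl]; linarith
  have htpos : 0 < t := by linarith
  have hbpos : 0 < a + 1 := by linarith
  have key : ∀ n : ℕ, (q ^ t) ^ (n+1) ≤ (1-l) * (q ^ a) ^ (n+1) + l * (q ^ (a+1)) ^ (n+1) := by
    intro n
    have e : ∀ s : ℝ, (q ^ s) ^ (n+1) = Real.exp ((s * ((n:ℝ)+1)) * Real.log q) := by
      intro s
      rw [← Real.rpow_natCast (q ^ s) (n+1), ← Real.rpow_mul hq0.le,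
        Real.rpow_def_of_pos hq0]
      push_cast; ring_nf
    rw [e t, e a, e (a+1)]
    have hc := convexOn_exp.2 (Set.mem_univ ((a * ((n:ℝ)+1)) * Real.log q))
      (Set.mem_univ (((a+1) * ((n:ℝ)+1)) * Real.log q)) (by linarith : (0:ℝ) ≤ 1 - l) hl0
      (by ring : (1 - l) + l = 1)
    simp only [smul_eq_mul] at hc
    have harg : (1-l) * (a * ((n:ℝ)+1) * Real.log q) + l * ((a+1) * ((n:ℝ)+1) * Real.log q)
        = (t * ((n:ℝ)+1)) * Real.log q := by rw [hl]; ring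
    rw [harg] at hc
    exact hc
  have hsum1 := summable_pow_succ hq0 hq1 (u := q ^ t) (rpos hq0 hq1 t).le (rlt1 hq0 hq1 htpos)
  have hsuma := summable_pow_succ hq0 hq1 (u := q ^ a) (rpos hq0 hq1 a).le (rlt1 hq0 hq1 ha)
  have hsumb := summable_pow_succ hq0 hq1 (u := q ^ (a+1)) (rpos hq0 hq1 (a+1)).le (rlt1 hq0 hq1 hbpos)
  have hts : ∑' n : ℕ, (q ^ t) ^ (n+1)
      ≤ ∑' n : ℕ, ((1-l) * (q ^ a) ^ (n+1) + l * (q ^ (a+1)) ^ (n+1)) :=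
    Summable.tsum_le_tsum key hsum1 ((hsuma.mul_left _).add (hsumb.mul_left _))
  rw [Summable.tsum_add (hsuma.mul_left _) (hsumb.mul_left _), tsum_mul_left, tsum_mul_left] at hts
  have hlogq : (0:ℝ) ≤ -Real.log q := by
    have := Real.log_neg hq0 hq1; linarith
  have := mul_le_mul_of_nonneg_left hts hlogq
  rw [F1_series hq0 hq1 htpos, F1_series hq0 hq1 ha, F1_series hq0 hq1 hbpos]
  calc -Real.log q * ∑' n : ℕ, (q ^ t) ^ (n+1)
      ≤ -Real.log q * ((1-l) * ∑' n : ℕ, (q^a)^(n+1) + l * ∑' n : ℕ, (q^(a+1))^(n+1)) := this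
    _ = -Real.log q * ∑' n : ℕ, (q^a)^(n+1)
        + l * (-Real.log q * ∑' n : ℕ, (q^(a+1))^(n+1) - -Real.log q * ∑' n : ℕ, (q^a)^(n+1)) := by
        ring

lemma trapezoid {a : ℝ} (ha : 0 < a) :
    F q (a+1) - F q a ≤ (F1 q a + F1 q (a+1)) / 2 := by
  rw [← integral_F1 hq0 hq1 ha (by linarith : (0:ℝ) < a+1)]
  have hmono : ∫ t in a..(a+1), F1 q t
      ≤ ∫ t in a..(a+1), (F1 q a + (t - a) * (F1 q (a+1) - F1 q a)) := by
    apply intervalIntegral.integral_mono_on (by linarith)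
      (II_F1 hq0 hq1 ha (by linarith))
    · apply Continuous.intervalIntegrable
      continuity
    · exact fun t ht => chord hq0 hq1 ha ht
  have heval : ∫ t in a..(a+1), (F1 q a + (t - a) * (F1 q (a+1) - F1 q a))
      = (F1 q a + F1 q (a+1)) / 2 := by
    rw [intervalIntegral.integral_add intervalIntegrable_const
      (by apply Continuous.intervalIntegrable; continuity)]
    rw [intervalIntegral.integral_const]
    have : ∫ t in a..(a+1), (t - a) * (F1 q (a+1) - F1 q a)
        = (∫ t in a..(a+1), (t - a)) * (F1 q (a+1) - F1 q a) :=
      intervalIntegral.integral_mul_const _ _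
    rw [this, integral_comp_sub_right (fun u => u) a,
      integral_id]
    simp only [smul_eq_mul, sub_self, add_sub_cancel_left]
    norm_num
    ring
  linarith

lemma lower_point {a : ℝ} (ha : 0 < a) :
    F1 q (a+1) ≤ F q (a+1) - F q a := by
  rw [← integral_F1 hq0 hq1 ha (by linarith : (0:ℝ) < a+1)]
  have : F1 q (a+1) = ∫ _t in a..(a+1), F1 q (a+1) := by
    rw [intervalIntegral.integral_const]; simp
  rw [this]
  apply intervalIntegral.integral_mono_on (by linarith) intervalIntegrable_const
    (II_F1 hq0 hq1 ha (by linarith))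
  intro t ht
  exact F1_antitone hq0 hq1 (by linarith [ht.1] : (0:ℝ) < t) ht.2

end Chord


noncomputable def J (q x : ℝ) : ℝ := ∫ s in (1:ℝ)..x, F q s
noncomputable def H (q x c : ℝ) : ℝ := ∫ s in (1:ℝ)..x, F q (s + c)
noncomputable def v (q x : ℝ) (k : ℕ) : ℝ :=
  ∫ s in (1:ℝ)..x, (F q (s + (k:ℝ) + 1) - F q (s + (k:ℝ)) - F1 q (s + (k:ℝ) + 1))
noncomputable def P (q x : ℝ) (k : ℕ) : ℝ := F q (x + (k:ℝ)) - F q (1 + (k:ℝ))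

section MainSum

variable {x : ℝ} (hx : 1 ≤ x)
include hq0 hq1 hx
set_option linter.unusedSectionVars false

lemma II_shift_F (c : ℝ) (hc : 0 ≤ c) :
    IntervalIntegrable (fun s => F q (s + c)) MeasureTheory.volume 1 x := by
  apply ContinuousOn.intervalIntegrable
  apply (contOn_F hq0 hq1 (Set.Subset.refl (Set.Ioi 0))).comp
    (Continuous.continuousOn (by continuity))
  intro s hs
  rw [Set.uIcc_of_le hx] at hs
  have : (1:ℝ) ≤ s := hs.1
  exact Set.mem_Ioi.mpr (show (0:ℝ) < s + c by linarith)

lemma II_shift_F1 (c : ℝ) (hc : 0 ≤ c) :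
    IntervalIntegrable (fun s => F1 q (s + c)) MeasureTheory.volume 1 x := by
  apply ContinuousOn.intervalIntegrable
  apply (contOn_F1 hq0 hq1 (Set.Subset.refl (Set.Ioi 0))).comp
    (Continuous.continuousOn (by continuity))
  intro s hs
  rw [Set.uIcc_of_le hx] at hs
  have : (1:ℝ) ≤ s := hs.1
  exact Set.mem_Ioi.mpr (show (0:ℝ) < s + c by linarith)

lemma integral_shift_F1 (c : ℝ) (hc : 0 ≤ c) :
    ∫ s in (1:ℝ)..x, F1 q (s + c) = F q (x + c) - F q (1 + c) := by
  rw [integral_comp_add_right (F1 q) c]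
  exact integral_F1 hq0 hq1 (by linarith) (by linarith)

lemma v_eq (k : ℕ) :
    v q x k = H q x ((k:ℝ)+1) - H q x (k:ℝ) - (F q (x + ((k:ℝ)+1)) - F q (1 + ((k:ℝ)+1))) := by
  unfold v H
  have h1 := II_shift_F hq0 hq1 hx ((k:ℝ)+1) (by positivity)
  have h2 := II_shift_F hq0 hq1 hx ((k:ℝ)) (by positivity)
  have h3 := II_shift_F1 hq0 hq1 hx ((k:ℝ)+1) (by positivity)
  have e : ∀ s : ℝ, F q (s + (k:ℝ) + 1) - F q (s + (k:ℝ)) - F1 q (s + (k:ℝ) + 1)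
      = F q (s + ((k:ℝ)+1)) - F q (s + (k:ℝ)) - F1 q (s + ((k:ℝ)+1)) := by
    intro s; rw [add_assoc]
  simp only [e]
  rw [intervalIntegral.integral_sub (h1.sub h2) h3, intervalIntegral.integral_sub h1 h2,
    integral_shift_F1 hq0 hq1 hx ((k:ℝ)+1) (by positivity)]

lemma v_nonneg (k : ℕ) : 0 ≤ v q x k := by
  unfold v
  apply intervalIntegral.integral_nonneg hx
  intro s hs
  have hs1 : (1:ℝ) ≤ s := hs.1
  have ha : 0 < s + (k:ℝ) := by positivity
  have := lower_point hq0 hq1 ha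
  linarith

lemma v_le_w (k : ℕ) : v q x k ≤ (P q x k - P q x (k+1)) / 2 := by
  have h1 := II_shift_F hq0 hq1 hx ((k:ℝ)+1) (by positivity)
  have h2 := II_shift_F hq0 hq1 hx ((k:ℝ)) (by positivity)
  have h3 := II_shift_F1 hq0 hq1 hx ((k:ℝ)+1) (by positivity)
  have h4 := II_shift_F1 hq0 hq1 hx ((k:ℝ)) (by positivity)
  have e : ∀ s : ℝ, F q (s+(k:ℝ)+1) - F q (s+(k:ℝ)) - F1 q (s+(k:ℝ)+1)
      = F q (s+((k:ℝ)+1)) - F q (s+(k:ℝ)) - F1 q (s+((k:ℝ)+1)) := fun s => by rw [add_assoc]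
  have hle : v q x k ≤ ∫ s in (1:ℝ)..x, (F1 q (s+(k:ℝ)) - F1 q (s+((k:ℝ)+1))) / 2 := by
    unfold v
    simp only [e]
    apply intervalIntegral.integral_mono_on hx ((h1.sub h2).sub h3)
      ((h4.sub h3).div_const 2)
    intro s hs
    have hs1 : (1:ℝ) ≤ s := hs.1
    have ha : 0 < s + (k:ℝ) := by positivity
    have htr := trapezoid hq0 hq1 ha
    rw [add_assoc] at htr
    linarith
  calc v q x k ≤ _ := hle
    _ = (P q x k - P q x (k+1))/2 := by
      have e2 : ∀ s:ℝ, (F1 q (s+(k:ℝ)) - F1 q (s+((k:ℝ)+1)))/2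
          = F1 q (s+(k:ℝ))/2 - F1 q (s+((k:ℝ)+1))/2 := fun s => by ring
      simp only [e2]
      rw [intervalIntegral.integral_sub (h4.div_const 2) (h3.div_const 2),
        intervalIntegral.integral_div, intervalIntegral.integral_div,
        integral_shift_F1 hq0 hq1 hx _ (by positivity : (0:ℝ) ≤ (k:ℝ)),
        integral_shift_F1 hq0 hq1 hx _ (by positivity : (0:ℝ) ≤ (k:ℝ)+1)]
      unfold P
      push_cast
      ring

lemma P_nonneg (k : ℕ) : 0 ≤ P q x k := by
  unfold P
  have := F_mono hq0 hq1 (show (0:ℝ) < 1+(k:ℝ) by positivity)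
    (show (1:ℝ)+(k:ℝ) ≤ x+(k:ℝ) by linarith)
  linarith

lemma tendsto_P : Tendsto (fun k : ℕ => P q x k) atTop (𝓝 0) := by
  unfold P
  have h1 : Tendsto (fun k : ℕ => F q (x+(k:ℝ))) atTop (𝓝 0) := by
    have := tendsto_F hq0 hq1 x
    simpa [add_comm] using this
  have h2 : Tendsto (fun k : ℕ => F q (1+(k:ℝ))) atTop (𝓝 0) := by
    have := tendsto_F hq0 hq1 1
    simpa [add_comm] using this
  simpa using h1.sub h2

lemma hasSum_w : HasSum (fun k => (P q x k - P q x (k+1)) / 2) (P q x 0 / 2) := by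
  have hnn : ∀ k, 0 ≤ (P q x k - P q x (k+1)) / 2 :=
    fun k => le_trans (v_nonneg hq0 hq1 hx k) (v_le_w hq0 hq1 hx k)
  rw [hasSum_iff_tendsto_nat_of_nonneg hnn]
  have hps : ∀ n : ℕ, ∑ i ∈ Finset.range n, (P q x i - P q x (i+1))/2
      = P q x 0 / 2 - P q x n / 2 := by
    intro n
    have : ∀ i, (P q x i - P q x (i+1))/2 = P q x i/2 - P q x (i+1)/2 := fun i => by ring
    simp only [this]
    exact Finset.sum_range_sub' (fun i => P q x i / 2) n
  simp only [hps]
  simpa using ((tendsto_P hq0 hq1 hx).div_const 2).const_sub (P q x 0 / 2)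

lemma summable_v : Summable (v q x) :=
  Summable.of_nonneg_of_le (v_nonneg hq0 hq1 hx) (v_le_w hq0 hq1 hx)
    (hasSum_w hq0 hq1 hx).summable

lemma tsum_v_nonneg : 0 ≤ ∑' k, v q x k := tsum_nonneg (v_nonneg hq0 hq1 hx)

lemma tsum_v_le : ∑' k, v q x k ≤ (F q x - F q 1) / 2 := by
  have := Summable.tsum_le_tsum (v_le_w hq0 hq1 hx) (summable_v hq0 hq1 hx)
    (hasSum_w hq0 hq1 hx).summable
  rw [(hasSum_w hq0 hq1 hx).tsum_eq] at this
  unfold P at this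
  simpa using this

lemma tendsto_H : Tendsto (fun N : ℕ => H q x (N:ℝ)) atTop (𝓝 0) := by
  apply squeeze_zero_norm (a := fun N : ℕ => (-F q (1+(N:ℝ))) * |x - 1|)
  · intro N
    unfold H
    apply intervalIntegral.norm_integral_le_of_norm_le_const
    intro s hs
    rw [Set.uIoc_of_le hx] at hs
    have hs1 : (1:ℝ) < s := hs.1
    have hF1 : F q (s+(N:ℝ)) < 0 := F_neg hq0 hq1 (by positivity)
    have hmono := F_mono hq0 hq1 (show (0:ℝ) < 1+(N:ℝ) by positivity)
      (show (1:ℝ)+(N:ℝ) ≤ s+(N:ℝ) by linarith)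
    rw [Real.norm_eq_abs, abs_of_neg hF1]
    linarith
  · have h2 : Tendsto (fun k : ℕ => -F q (1+(k:ℝ))) atTop (𝓝 0) := by
      have := tendsto_F hq0 hq1 1
      simpa [add_comm] using (this.neg)
    simpa using h2.mul_const |x - 1|

lemma summable_av : Summable (fun k : ℕ => F q ((k:ℝ)+1) - F q ((k:ℝ)+x+1)) := by
  have h : Summable (fun k : ℕ => -(F q ((k:ℝ)+1) - F q ((k:ℝ)+x+1))) := by
    apply Summable.of_nonneg_of_le (f := fun k : ℕ => -F q ((k:ℝ)+1))
    · intro k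
      have := F_mono hq0 hq1 (show (0:ℝ) < (k:ℝ)+1 by positivity)
        (show (k:ℝ)+1 ≤ (k:ℝ)+x+1 by linarith)
      simp only [neg_sub]
      linarith
    · intro k
      have := F_neg hq0 hq1 (show (0:ℝ) < (k:ℝ)+x+1 by positivity)
      simp only [neg_sub]
      linarith
    · exact summable_negF hq0 hq1 1 le_rfl
  simpa using h.neg

lemma H_zero : H q x 0 = J q x := by
  unfold H J; simp

lemma hasSum_main :
    HasSum (fun k : ℕ => F q ((k:ℝ)+1) - F q ((k:ℝ)+x+1)) (F q 1 + J q x + ∑' k, v q x k) := by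
  set av := fun k : ℕ => F q ((k:ℝ)+1) - F q ((k:ℝ)+x+1) with hav
  set g := fun k : ℕ => F q ((k:ℝ)+1) + H q x (k:ℝ) with hg
  have key : ∀ k : ℕ, av k = v q x k + (g k - g (k+1)) := by
    intro k
    rw [v_eq hq0 hq1 hx k]
    simp only [hav, hg]
    push_cast
    have e1 : F q (x + ((k:ℝ)+1)) = F q ((k:ℝ)+x+1) := by ring_nf
    have e2 : F q (1 + ((k:ℝ)+1)) = F q ((k:ℝ)+1+1) := by ring_nf
    rw [e1, e2]
    ring
  have hps : ∀ n : ℕ, ∑ k ∈ Finset.range n, av k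
      = (∑ k ∈ Finset.range n, v q x k) + (g 0 - g n) := by
    intro n
    simp only [key]
    rw [Finset.sum_add_distrib, Finset.sum_range_sub' g n]
  have hg0 : g 0 = F q 1 + J q x := by
    simp only [hg]
    rw [Nat.cast_zero, H_zero hq0 hq1 hx]
    norm_num
  have hgn : Tendsto (fun n : ℕ => g n) atTop (𝓝 0) := by
    simp only [hg]
    have h1 : Tendsto (fun n : ℕ => F q ((n:ℝ)+1)) atTop (𝓝 0) := tendsto_F hq0 hq1 1
    simpa using h1.add (tendsto_H hq0 hq1 hx)
  have hsum := summable_av hq0 hq1 hx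
  have h1 := hsum.hasSum.tendsto_sum_nat
  have h2 : Tendsto (fun n : ℕ => ∑ k ∈ Finset.range n, av k) atTop
      (𝓝 (F q 1 + J q x + ∑' k, v q x k)) := by
    simp only [hps]
    have hv := (summable_v hq0 hq1 hx).hasSum.tendsto_sum_nat
    have hconst : Tendsto (fun _ : ℕ => g 0) atTop (𝓝 (g 0)) := tendsto_const_nhds
    have h4 := hv.add (hconst.sub hgn)
    simp only [sub_zero] at h4
    rw [hg0] at h4
    convert h4 using 2
    · rw [hg0]
    · ring
  have := tendsto_nhds_unique h1 h2
  rw [← this]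
  exact hsum.hasSum

end MainSum


section Dilog
include hq0 hq1

lemma ell_II {c : ℝ} (h0 : 0 ≤ c) (h1 : c < 1) :
    IntervalIntegrable (fun t => Real.log (1 - t) / t) MeasureTheory.volume 0 c := by
  rw [intervalIntegrable_iff_integrableOn_Ioc_of_le h0]
  apply MeasureTheory.Integrable.mono' (MeasureTheory.integrable_const (1/(1-c)))
  · exact ((Real.measurable_log.comp (measurable_const.sub measurable_id)).div
      measurable_id).aestronglyMeasurable
  · rw [MeasureTheory.ae_restrict_iff' measurableSet_Ioc]
    apply Filter.Eventually.of_forall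
    intro t ht
    obtain ⟨ht0, htc⟩ := ht
    have h1t : 0 < 1 - t := by linarith
    have hlog_neg : Real.log (1 - t) ≤ 0 :=
      Real.log_nonpos (by linarith) (by linarith)
    have hb := neglog_le hq0 hq1 (u := t) ht0.le (by linarith)
    rw [Real.norm_eq_abs, abs_div, abs_of_nonpos hlog_neg, abs_of_pos ht0]
    rw [div_le_div_iff₀ ht0 (by linarith : (0:ℝ) < 1 - c)]
    have hb2 : -Real.log (1 - t) * (1 - t) ≤ t := by
      have := mul_le_mul_of_nonneg_right hb h1t.le
      rwa [div_mul_cancel₀ _ (ne_of_gt h1t)] at this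
    nlinarith [mul_le_mul_of_nonneg_left (show 1-c ≤ 1-t by linarith)
      (neg_nonneg.mpr hlog_neg)]

variable {x : ℝ} (hx : 1 ≤ x)
include hx

lemma dilog_diff :
    dilog (1 - q ^ x) - dilog (1 - q) = Real.log q * (F q 1 - x * F q x + J q x) := by
  have hx0 : (0:ℝ) < x := by linarith
  have hqx1 : q ^ x < 1 := rlt1 hq0 hq1 hx0
  have hqx0 : 0 < q ^ x := rpos hq0 hq1 x
  have hq1' : (0:ℝ) < 1 - q := by linarith
  have hc2 : 1 - q ^ x < 1 := by linarith
  have split : dilog (1 - q ^ x) - dilog (1 - q)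
      = -∫ t in (1-q)..(1-q^x), Real.log (1 - t) / t := by
    unfold dilog
    have h := intervalIntegral.integral_interval_sub_left
      (ell_II hq0 hq1 (c := 1 - q ^ x) (by linarith) hc2)
      (ell_II hq0 hq1 (c := 1 - q) (by linarith) (by linarith))
    linarith
  have hf : ∀ s ∈ Set.uIcc (1:ℝ) x, HasDerivAt (fun s : ℝ => 1 - q ^ s)
      (-(q ^ s * Real.log q)) s := by
    intro s _
    exact ((Real.hasStrictDerivAt_const_rpow hq0 s).hasDerivAt).const_sub 1
  have hmem : ∀ s ∈ Set.uIcc (1:ℝ) x, 1 - q ≤ 1 - q ^ s ∧ 1 - q ^ s ≤ 1 - q ^ x := by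
    intro s hs
    rw [Set.uIcc_of_le hx] at hs
    constructor
    · have : q ^ s ≤ q ^ (1:ℝ) := rpow_antitone hq0 hq1 hs.1
      rw [Real.rpow_one] at this; linarith
    · have : q ^ x ≤ q ^ s := rpow_antitone hq0 hq1 hs.2
      linarith
  have hcont : ContinuousOn (fun s : ℝ => -(q ^ s * Real.log q)) (Set.uIcc 1 x) := by
    apply ContinuousOn.neg
    exact ((continuous_rpow_base hq0 hq1).continuousOn).mul continuousOn_const
  have hg' : ContinuousOn (fun t : ℝ => Real.log (1 - t) / t)
      (Set.Icc (1 - q) (1 - q ^ x)) := by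
    intro t ht
    have h1 : 0 < t := lt_of_lt_of_le hq1' ht.1
    have h2 : 0 < 1 - t := by have := ht.2; linarith
    exact ((((continuous_const.sub continuous_id).continuousWithinAt).log
      (ne_of_gt h2)).div continuousWithinAt_id (ne_of_gt h1))
  have hg : ContinuousOn (fun t : ℝ => Real.log (1 - t) / t)
      ((fun s : ℝ => 1 - q ^ s) '' Set.uIcc 1 x) := by
    apply hg'.mono
    rintro t ⟨s, hs, rfl⟩
    exact ⟨(hmem s hs).1, (hmem s hs).2⟩
  have cov := integral_comp_smul_deriv' (f := fun s : ℝ => 1 - q ^ s)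
    (f' := fun s : ℝ => -(q ^ s * Real.log q)) (g := fun t => Real.log (1 - t) / t)
    (a := 1) (b := x) hf hcont hg
  have hpt : ∀ s ∈ Set.uIcc (1:ℝ) x,
      (-(q ^ s * Real.log q)) • (Real.log (1 - (1 - q ^ s)) / (1 - q ^ s))
      = Real.log q * (s * F1 q s) := by
    intro s hs
    rw [Set.uIcc_of_le hx] at hs
    have hs0 : (0:ℝ) < s := by linarith [hs.1]
    have : (1:ℝ) - (1 - q ^ s) = q ^ s := by ring
    rw [this, Real.log_rpow hq0]
    unfold F1
    rw [smul_eq_mul]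
    ring
  have parts : ∫ s in (1:ℝ)..x, s * F1 q s = x * F q x - 1 * F q 1 - ∫ s in (1:ℝ)..x, 1 * F q s := by
    apply intervalIntegral.integral_mul_deriv_eq_deriv_mul
      (u := fun s => s) (v := F q) (u' := fun _ => (1:ℝ)) (v' := F1 q)
    · intro s _; exact hasDerivAt_id s
    · intro s hs
      rw [Set.uIcc_of_le hx] at hs
      exact hasDerivAt_F hq0 hq1 (by linarith [hs.1])
    · exact intervalIntegrable_const
    · exact II_F1 hq0 hq1 (by norm_num) (by linarith)
  have main : ∫ s in (1:ℝ)..x, Real.log q * (s * F1 q s)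
      = Real.log q * (x * F q x - F q 1 - J q x) := by
    rw [intervalIntegral.integral_const_mul, parts]
    unfold J
    simp only [one_mul]
  have e0 : (1:ℝ) - q ^ (1:ℝ) = 1 - q := by rw [Real.rpow_one]
  have e1 : (∫ t in (1-q)..(1-q^x), Real.log (1-t)/t)
      = ∫ s in (1:ℝ)..x, (-(q^s*Real.log q)) • (Real.log (1 - (1 - q^s))/(1-q^s)) := by
    rw [← e0]
    exact cov.symm
  rw [split, e1, intervalIntegral.integral_congr hpt, main]
  ring

end Dilog


section Gamma
include hq0 hq1

lemma qGamma_eq {x : ℝ} (hx : 1 ≤ x) :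
    qGamma q (x+1) = Real.exp (-x * F q 1
      + ∑' k : ℕ, (F q ((k:ℝ)+1) - F q ((k:ℝ)+x+1))) := by
  have hq1' : (0:ℝ) < 1 - q := by linarith
  have hlog : ∀ j : ℕ, Real.log ((1 - q ^ (j + 1)) / (1 - q ^ ((j:ℝ) + (x+1))))
      = F q ((j:ℝ)+1) - F q ((j:ℝ)+x+1) := by
    intro j
    have hnum : (1:ℝ) - q ^ (j + 1) = 1 - q ^ ((j:ℝ) + 1) := by
      rw [← Real.rpow_natCast q (j+1)]
      push_cast
      ring_nf
    have hden : ((j:ℝ) + (x+1)) = (j:ℝ) + x + 1 := by ring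
    rw [hnum, hden]
    have h1 : 0 < 1 - q ^ ((j:ℝ)+1) := one_sub_pos hq0 hq1 (by positivity)
    have h2 : 0 < 1 - q ^ ((j:ℝ)+x+1) := one_sub_pos hq0 hq1 (by positivity)
    rw [Real.log_div (ne_of_gt h1) (ne_of_gt h2)]
    rfl
  have hfn : ∀ (_ : Unit) (j : ℕ), 0 < (1 - q ^ (j + 1)) / (1 - q ^ ((j:ℝ) + (x+1))) := by
    intro _ j
    have hnum : (1:ℝ) - q ^ (j + 1) = 1 - q ^ ((j:ℝ) + 1) := by
      rw [← Real.rpow_natCast q (j+1)]; push_cast; ring_nf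
    rw [hnum]
    exact div_pos (one_sub_pos hq0 hq1 (by positivity))
      (one_sub_pos hq0 hq1 (by positivity))
  have hf : ∀ _ : Unit, Summable fun j : ℕ =>
      Real.log ((1 - q ^ (j + 1)) / (1 - q ^ ((j:ℝ) + (x+1)))) := by
    intro _
    simp only [hlog]
    exact summable_av hq0 hq1 hx
  have hprod := Real.rexp_tsum_eq_tprod
    (f := fun (j : ℕ) => (1 - q ^ (j + 1)) / (1 - q ^ ((j:ℝ) + (x+1)))) (hfn ()) (hf ())
  unfold qGamma
  have e1 : (1:ℝ) - (x+1) = -x := by ring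
  rw [e1, Real.rpow_def_of_pos hq1']
  have e2 : (∏' j : ℕ, (1 - q ^ (j + 1)) / (1 - q ^ ((j:ℝ) + (x+1))))
      = Real.exp (∑' j : ℕ, (F q ((j:ℝ)+1) - F q ((j:ℝ)+x+1))) := by
    rw [← hprod]
    congr 1
    exact tsum_congr hlog
  rw [e2, ← Real.exp_add]
  congr 1
  unfold F
  rw [Real.rpow_one]
  ring

end Gamma

end QG

/-- For `0 < q < 1` and `x ≥ 1`, with
`E = exp(−Li₂(1−q)/log q)·exp(Li₂(1−q^x)/log q)`,
`((1−q^x)/(1−q))^x · E ≤ Γ_q(x+1) ≤ ((1−q^x)/(1−q))^(x+1/2) · E`. -/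
theorem qGamma_bounds (q x : ℝ) (hq0 : 0 < q) (hq1 : q < 1) (hx : 1 ≤ x) :
    ((1 - q ^ x) / (1 - q)) ^ x *
        (Real.exp (-dilog (1 - q) / Real.log q) * Real.exp (dilog (1 - q ^ x) / Real.log q))
      ≤ qGamma q (x + 1) ∧
    qGamma q (x + 1)
      ≤ ((1 - q ^ x) / (1 - q)) ^ (x + 1 / 2) *
        (Real.exp (-dilog (1 - q) / Real.log q) * Real.exp (dilog (1 - q ^ x) / Real.log q)) := by
  have hx0 : (0:ℝ) < x := by linarith
  have hq1' : (0:ℝ) < 1 - q := by linarith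
  have hqx1 : q ^ x < 1 := QG.rlt1 hq0 hq1 hx0
  have hqx0 : 0 < q ^ x := QG.rpos hq0 hq1 x
  have hbase : 0 < (1 - q ^ x) / (1 - q) := div_pos (by linarith) hq1'
  have hL : Real.log q ≠ 0 := ne_of_lt (Real.log_neg hq0 hq1)
  have hE : Real.exp (-dilog (1 - q) / Real.log q) * Real.exp (dilog (1 - q ^ x) / Real.log q)
      = Real.exp (QG.F q 1 - x * QG.F q x + QG.J q x) := by
    rw [← Real.exp_add]
    congr 1
    have hd := QG.dilog_diff hq0 hq1 hx
    calc -dilog (1 - q) / Real.log q + dilog (1 - q ^ x) / Real.log q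
        = (dilog (1 - q ^ x) - dilog (1 - q)) / Real.log q := by ring
      _ = (Real.log q * (QG.F q 1 - x * QG.F q x + QG.J q x)) / Real.log q := by rw [hd]
      _ = QG.F q 1 - x * QG.F q x + QG.J q x := mul_div_cancel_left₀ _ hL
  have hlogbase : Real.log ((1 - q ^ x) / (1 - q)) = QG.F q x - QG.F q 1 := by
    rw [Real.log_div (by linarith) (by linarith)]
    unfold QG.F
    rw [Real.rpow_one]
  have hpow : ∀ y : ℝ, ((1 - q ^ x) / (1 - q)) ^ y
      = Real.exp (y * (QG.F q x - QG.F q 1)) := by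
    intro y
    rw [Real.rpow_def_of_pos hbase, hlogbase, mul_comm]
  have hqg : qGamma q (x+1)
      = Real.exp (-x * QG.F q 1 + (QG.F q 1 + QG.J q x + ∑' k, QG.v q x k)) := by
    rw [QG.qGamma_eq hq0 hq1 hx, (QG.hasSum_main hq0 hq1 hx).tsum_eq]
  have hV0 := QG.tsum_v_nonneg hq0 hq1 hx
  have hV1 := QG.tsum_v_le hq0 hq1 hx
  constructor
  · rw [hpow x, hE, hqg, ← Real.exp_add, Real.exp_le_exp]
    ring_nf
    nlinarith [hV0]
  · rw [hpow (x + 1/2), hE, hqg, ← Real.exp_add, Real.exp_le_exp]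
    ring_nf
    nlinarith [hV1]
end

section
/- Let a, b be real numbers with 0<a<b. Then (b^{b−1}/a^{a−1})·e^{a−b} < Γ(b)/Γ(a) < (b^{b−1/2}/a^{a−1/2})·e^{a−b}, where Γ is the Euler gamma function. -/
open Real Filter Finset

/-! Auxiliary definitions -/

noncomputable def gammaLB (x : ℝ) : ℝ := Real.log (Real.Gamma x) - ((x - 1) * Real.log x - x)
noncomputable def gammaUB (x : ℝ) : ℝ := Real.log (Real.Gamma x) - ((x - 1/2) * Real.log x - x)
noncomputable def ccDec (x : ℝ) : ℝ := 1 - x * (Real.log (x+1) - Real.log x)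
noncomputable def ddInc (x : ℝ) : ℝ := 1 - (x + 1/2) * (Real.log (x+1) - Real.log x)

/-! Elementary log inequalities -/

lemma log_gap_gt {x : ℝ} (hx : 0 < x) : 1/(x+1) < Real.log (x+1) - Real.log x := by
  have hx1 : (0:ℝ) < x + 1 := by linarith
  have h1 : Real.log (x/(x+1)) < x/(x+1) - 1 :=
    Real.log_lt_sub_one_of_pos (by positivity)
      (ne_of_lt ((div_lt_one hx1).mpr (by linarith)))
  rw [Real.log_div hx.ne' hx1.ne'] at h1
  have h2 : x/(x+1) - 1 = -(1/(x+1)) := by field_simp; ring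
  linarith [h1, h2.symm ▸ h1]

lemma log_gap_lt {x : ℝ} (hx : 0 < x) :
    Real.log (x+1) - Real.log x < (x + 1/2)/(x*(x+1)) := by
  have hx1 : (0:ℝ) < x + 1 := by linarith
  set u : ℝ := Real.log (x+1) - Real.log x with hu
  have hupos : 0 < u := by
    have := Real.log_lt_log hx (by linarith : x < x + 1)
    simpa [hu] using sub_pos.mpr this
  have hsinh : u < Real.sinh u := Real.self_lt_sinh_iff.mpr hupos
  have heu : Real.exp u = (x+1)/x := by
    rw [hu, Real.exp_sub, Real.exp_log hx1, Real.exp_log hx]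
  have henu : Real.exp (-u) = x/(x+1) := by
    rw [Real.exp_neg, heu]
    field_simp
  have hs : Real.sinh u = (x + 1/2)/(x*(x+1)) := by
    rw [Real.sinh_eq, heu, henu]
    field_simp
    ring
  linarith [hs ▸ hsinh]

/-! Strict monotonicity of the increments -/

lemma hasDerivAt_ccDec {x : ℝ} (hx : 0 < x) :
    HasDerivAt ccDec (-((Real.log (x+1) - Real.log x) - 1/(x+1))) x := by
  have hx1 : (0:ℝ) < x + 1 := by linarith
  have h1 : HasDerivAt (fun y : ℝ => Real.log (y+1)) (1/(x+1)) x := by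
    simpa using ((hasDerivAt_id x).add_const 1).log hx1.ne'
  have h2 : HasDerivAt Real.log x⁻¹ x := Real.hasDerivAt_log hx.ne'
  have h3 : HasDerivAt (fun y : ℝ => y * (Real.log (y+1) - Real.log y))
      (1 * (Real.log (x+1) - Real.log x) + x * (1/(x+1) - x⁻¹)) x :=
    (hasDerivAt_id x).mul (h1.sub h2)
  have h4 := (h3.const_sub 1)
  refine h4.congr_deriv ?_
  have hxne : x ≠ 0 := hx.ne'
  have hx1ne : x + 1 ≠ 0 := hx1.ne'
  field_simp
  ring

lemma hasDerivAt_ddInc {x : ℝ} (hx : 0 < x) :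
    HasDerivAt ddInc ((x + 1/2)/(x*(x+1)) - (Real.log (x+1) - Real.log x)) x := by
  have hx1 : (0:ℝ) < x + 1 := by linarith
  have h1 : HasDerivAt (fun y : ℝ => Real.log (y+1)) (1/(x+1)) x := by
    simpa using ((hasDerivAt_id x).add_const 1).log hx1.ne'
  have h2 : HasDerivAt Real.log x⁻¹ x := Real.hasDerivAt_log hx.ne'
  have h3 : HasDerivAt (fun y : ℝ => (y + 1/2) * (Real.log (y+1) - Real.log y))
      (1 * (Real.log (x+1) - Real.log x) + (x + 1/2) * (1/(x+1) - x⁻¹)) x :=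
    ((hasDerivAt_id x).add_const (1/2)).mul (h1.sub h2)
  have h4 := (h3.const_sub 1)
  refine h4.congr_deriv ?_
  have hxne : x ≠ 0 := hx.ne'
  have hx1ne : x + 1 ≠ 0 := hx1.ne'
  field_simp
  ring

lemma ccDec_strictAnti : StrictAntiOn ccDec (Set.Ioi 0) := by
  apply strictAntiOn_of_deriv_neg (convex_Ioi 0)
  · intro x hx
    exact (hasDerivAt_ccDec hx).differentiableAt.continuousAt.continuousWithinAt
  · intro x hx
    rw [interior_Ioi] at hx
    rw [(hasDerivAt_ccDec hx).deriv]
    have := log_gap_gt hx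
    linarith

lemma ddInc_strictMono : StrictMonoOn ddInc (Set.Ioi 0) := by
  apply strictMonoOn_of_deriv_pos (convex_Ioi 0)
  · intro x hx
    exact (hasDerivAt_ddInc hx).differentiableAt.continuousAt.continuousWithinAt
  · intro x hx
    rw [interior_Ioi] at hx
    rw [(hasDerivAt_ddInc hx).deriv]
    have := log_gap_lt hx
    linarith

/-! Functional equations -/

lemma log_Gamma_add_one {x : ℝ} (hx : 0 < x) :
    Real.log (Real.Gamma (x+1)) = Real.log x + Real.log (Real.Gamma x) := by
  rw [Real.Gamma_add_one hx.ne', Real.log_mul hx.ne' (Real.Gamma_pos_of_pos hx).ne']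

lemma gammaLB_add_one {x : ℝ} (hx : 0 < x) : gammaLB (x+1) = gammaLB x + ccDec x := by
  simp only [gammaLB, ccDec, log_Gamma_add_one hx]
  ring

lemma gammaUB_add_one {x : ℝ} (hx : 0 < x) : gammaUB (x+1) = gammaUB x + ddInc x := by
  simp only [gammaUB, ddInc, log_Gamma_add_one hx]
  ring

lemma gammaLB_add_nat {x : ℝ} (hx : 0 < x) (n : ℕ) :
    gammaLB (x + n) = gammaLB x + ∑ k ∈ Finset.range n, ccDec (x + k) := by
  induction n with
  | zero => simp
  | succ n ih =>
    have hxn : (0:ℝ) < x + n := by positivity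
    have : x + ((n:ℝ)+1) = (x + n) + 1 := by ring
    rw [Nat.cast_add, Nat.cast_one, this, gammaLB_add_one hxn, ih, Finset.sum_range_succ]
    ring

lemma gammaUB_add_nat {x : ℝ} (hx : 0 < x) (n : ℕ) :
    gammaUB (x + n) = gammaUB x + ∑ k ∈ Finset.range n, ddInc (x + k) := by
  induction n with
  | zero => simp
  | succ n ih =>
    have hxn : (0:ℝ) < x + n := by positivity
    have : x + ((n:ℝ)+1) = (x + n) + 1 := by ring
    rw [Nat.cast_add, Nat.cast_one, this, gammaUB_add_one hxn, ih, Finset.sum_range_succ]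
    ring

/-! Limit lemmas -/

lemma log_diff_tendsto (u v : ℝ) :
    Tendsto (fun n : ℕ => Real.log (u + n) - Real.log (v + n)) atTop (nhds 0) := by
  have hnat : Tendsto (fun n : ℕ => v + (n:ℝ)) atTop atTop :=
    tendsto_atTop_add_const_left _ v tendsto_natCast_atTop_atTop
  have h0 : Tendsto (fun n : ℕ => (u - v)/(v + (n:ℝ))) atTop (nhds 0) :=
    Tendsto.div_atTop tendsto_const_nhds hnat
  have h1 : Tendsto (fun n : ℕ => 1 + (u - v)/(v + (n:ℝ))) atTop (nhds (1 + 0)) :=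
    (tendsto_const_nhds (x := (1:ℝ))).add h0
  norm_num at h1
  have h2 : Tendsto (fun n : ℕ => Real.log (1 + (u - v)/(v + (n:ℝ)))) atTop (nhds 0) := by
    have := (Real.continuousAt_log one_ne_zero).tendsto.comp h1
    simpa [Function.comp_def] using this
  apply h2.congr'
  have hev : ∀ᶠ x : ℝ in atTop, (0:ℝ) < u + x ∧ (0:ℝ) < v + x := by
    filter_upwards [eventually_ge_atTop (max (-u) (-v) + 1)] with x hx
    constructor
    · have := le_max_left (-u) (-v); linarith
    · have := le_max_right (-u) (-v); linarith
  filter_upwards [tendsto_natCast_atTop_atTop.eventually hev] with n hn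
  have hv' : (v + (n:ℝ)) ≠ 0 := hn.2.ne'
  rw [← Real.log_div hn.1.ne' hn.2.ne']
  congr 1
  field_simp
  ring

lemma mul_log_tendsto (a b : ℝ) (ha : 0 < a) (hab : a < b) :
    Tendsto (fun n : ℕ => (a + (n:ℝ) - 1/2) * (Real.log (b + n) - Real.log (a + n)))
      atTop (nhds (b - a)) := by
  set c : ℝ := b - a with hcdef
  have hc : 0 < c := sub_pos.mpr hab
  have key : Tendsto (fun x : ℝ => (x - 1/2) * Real.log (1 + c/x)) atTop (nhds c) := by
    have h1 : Tendsto (fun x : ℝ => x * Real.log (1 + c/x)) atTop (nhds c) :=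
      Real.tendsto_mul_log_one_add_div_atTop c
    have h2 : Tendsto (fun x : ℝ => Real.log (1 + c/x)) atTop (nhds 0) := by
      have h0 : Tendsto (fun x : ℝ => 1 + c/x) atTop (nhds (1 + 0)) :=
        (tendsto_const_nhds (x := (1:ℝ))).add
          (Tendsto.div_atTop (tendsto_const_nhds (x := c)) tendsto_id)
      norm_num at h0
      have := (Real.continuousAt_log one_ne_zero).tendsto.comp h0
      simpa [Function.comp_def] using this
    have := h1.sub (h2.const_mul (1/2))
    simp only [sub_zero, mul_comm] at this
    apply Tendsto.congr ?_ (by simpa using this)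
    intro x; ring
  have hnat : Tendsto (fun n : ℕ => a + (n:ℝ)) atTop atTop :=
    tendsto_atTop_add_const_left _ a tendsto_natCast_atTop_atTop
  have := key.comp hnat
  apply this.congr
  intro n
  simp only [Function.comp]
  have hx : (0:ℝ) < a + n := by positivity
  congr 1
  have hxc : (0:ℝ) < b + n := by
    have : (0:ℝ) ≤ n := n.cast_nonneg
    linarith
  rw [← Real.log_div hxc.ne' hx.ne']
  congr 1
  rw [hcdef]
  field_simp
  ring

/-! Gamma at integers and log-convexity slope bounds -/

lemma Gamma_log_diff (m : ℕ) :
    Real.log (Real.Gamma ((m:ℝ)+2)) - Real.log (Real.Gamma ((m:ℝ)+1)) = Real.log ((m:ℝ)+1) := by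
  have h1 : Real.Gamma ((m:ℝ)+1) = (Nat.factorial m : ℝ) := by exact_mod_cast Real.Gamma_nat_eq_factorial m
  have h2 : Real.Gamma ((m:ℝ)+2) = (Nat.factorial (m+1) : ℝ) := by
    have := Real.Gamma_nat_eq_factorial (m+1)
    push_cast at this
    convert this using 2
    ring
  rw [h1, h2]
  have hfac : (0:ℝ) < (Nat.factorial m : ℝ) := by exact_mod_cast m.factorial_pos
  have h3 : (Nat.factorial (m+1) : ℝ) = ((m:ℝ)+1) * (Nat.factorial m : ℝ) := by
    rw [Nat.factorial_succ]; push_cast; ring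
  rw [h3, Real.log_mul (by positivity) hfac.ne']
  ring

lemma logGamma_slope_mono {x y z w : ℝ} (hx : 0 < x) (h1 : x < y) (h2 : y < z) (h3 : z < w) :
    (Real.log (Real.Gamma y) - Real.log (Real.Gamma x)) / (y - x) ≤
    (Real.log (Real.Gamma w) - Real.log (Real.Gamma z)) / (w - z) := by
  have hf := Real.convexOn_log_Gamma
  have hy : (0:ℝ) < y := hx.trans h1
  have hz : (0:ℝ) < z := hy.trans h2
  have hw : (0:ℝ) < w := hz.trans h3
  have s1 := hf.slope_mono_adjacent (Set.mem_Ioi.mpr hx) (Set.mem_Ioi.mpr hz) h1 h2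
  have s2 := hf.slope_mono_adjacent (Set.mem_Ioi.mpr hy) (Set.mem_Ioi.mpr hw) h2 h3
  simp only [Function.comp_apply] at s1 s2
  exact le_trans s1 s2

lemma gamma_tail_sandwich {a b : ℝ} (ha : 0 < a) (hab : a < b) (A : ℕ) (hbA : b < A)
    {n : ℕ} (hn : 2 ≤ n) :
    (b - a) * Real.log (-1 + (n:ℝ)) ≤
      Real.log (Real.Gamma (b + n)) - Real.log (Real.Gamma (a + n)) ∧
      Real.log (Real.Gamma (b + n)) - Real.log (Real.Gamma (a + n)) ≤
        (b - a) * Real.log ((A:ℝ) + n) := by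
  obtain ⟨m, rfl⟩ : ∃ m, n = m + 2 := ⟨n - 2, by omega⟩
  have hba : (0:ℝ) < b - a := sub_pos.mpr hab
  have hcast : ((m + 2 : ℕ) : ℝ) = (m:ℝ) + 2 := by push_cast; ring
  rw [hcast]
  constructor
  · -- lower bound
    have hs := logGamma_slope_mono (x := (m:ℝ)+1) (y := (m:ℝ)+2) (z := a + ((m:ℝ)+2))
      (w := b + ((m:ℝ)+2)) (by positivity) (by linarith) (by linarith) (by linarith)
    have e1 : ((m:ℝ)+2) - ((m:ℝ)+1) = 1 := by ring
    have e2 : (b + ((m:ℝ)+2)) - (a + ((m:ℝ)+2)) = b - a := by ring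
    rw [e1, e2, div_one, Gamma_log_diff m] at hs
    have e3 : (-1 + ((m:ℝ)+2)) = (m:ℝ)+1 := by ring
    rw [e3]
    calc (b - a) * Real.log ((m:ℝ)+1)
        ≤ (b - a) * ((Real.log (Real.Gamma (b + ((m:ℝ)+2))) -
            Real.log (Real.Gamma (a + ((m:ℝ)+2)))) / (b - a)) := by
          apply mul_le_mul_of_nonneg_left hs hba.le
      _ = Real.log (Real.Gamma (b + ((m:ℝ)+2))) - Real.log (Real.Gamma (a + ((m:ℝ)+2))) := by
          field_simp
  · -- upper bound
    have hs := logGamma_slope_mono (x := a + ((m:ℝ)+2)) (y := b + ((m:ℝ)+2))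
      (z := (m:ℝ) + (A:ℝ) + 2) (w := (m:ℝ) + (A:ℝ) + 3) (by positivity)
      (by linarith) (by linarith) (by linarith)
    have hgd := Gamma_log_diff (m + A + 1)
    have hc1 : ((m + A + 1 : ℕ) : ℝ) + 2 = (m:ℝ) + (A:ℝ) + 3 := by push_cast; ring
    have hc2 : ((m + A + 1 : ℕ) : ℝ) + 1 = (m:ℝ) + (A:ℝ) + 2 := by push_cast; ring
    rw [hc1, hc2] at hgd
    have e1 : ((m:ℝ) + (A:ℝ) + 3) - ((m:ℝ) + (A:ℝ) + 2) = 1 := by ring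
    have e2 : (b + ((m:ℝ)+2)) - (a + ((m:ℝ)+2)) = b - a := by ring
    rw [e1, e2, div_one, hgd] at hs
    have e4 : (A:ℝ) + ((m:ℝ)+2) = (m:ℝ) + (A:ℝ) + 2 := by ring
    rw [e4]
    calc Real.log (Real.Gamma (b + ((m:ℝ)+2))) - Real.log (Real.Gamma (a + ((m:ℝ)+2)))
        = (b - a) * ((Real.log (Real.Gamma (b + ((m:ℝ)+2))) -
            Real.log (Real.Gamma (a + ((m:ℝ)+2)))) / (b - a)) := by field_simp
      _ ≤ (b - a) * Real.log ((m:ℝ) + (A:ℝ) + 2) := mul_le_mul_of_nonneg_left hs hba.le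

/-! Tail limits -/

lemma gammaUB_tail {a b : ℝ} (ha : 0 < a) (hab : a < b) :
    Tendsto (fun n : ℕ => gammaUB (b + n) - gammaUB (a + n)) atTop (nhds 0) := by
  have hb : 0 < b := ha.trans hab
  have hba : 0 < b - a := sub_pos.mpr hab
  have lim_main : ∀ r : ℝ, Tendsto (fun n : ℕ =>
      (b - a) * Real.log (r + n) -
        ((b + n - 1/2) * Real.log (b + n) - (a + n - 1/2) * Real.log (a + n) - (b - a)))
      atTop (nhds 0) := by
    intro r
    have A1 := log_diff_tendsto r b
    have A2 := mul_log_tendsto a b ha hab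
    have E := ((tendsto_const_nhds (x := b - a)).mul A1).sub
      (A2.sub (tendsto_const_nhds (x := b - a)))
    norm_num at E
    apply E.congr
    intro n
    ring
  obtain ⟨A, hbA⟩ : ∃ A : ℕ, b < A := ⟨⌈b⌉₊ + 1, by
    have := Nat.le_ceil b; push_cast; linarith⟩
  have hl := lim_main (-1)
  have hu := lim_main (A:ℝ)
  apply tendsto_of_tendsto_of_tendsto_of_le_of_le' hl hu
  · filter_upwards [eventually_atTop.2 ⟨2, fun n hn => hn⟩] with n hn
    have := (gamma_tail_sandwich ha hab A hbA hn).1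
    simp only [gammaUB]
    linarith
  · filter_upwards [eventually_atTop.2 ⟨2, fun n hn => hn⟩] with n hn
    have := (gamma_tail_sandwich ha hab A hbA hn).2
    simp only [gammaUB]
    linarith

lemma gammaLB_tail {a b : ℝ} (ha : 0 < a) (hab : a < b) :
    Tendsto (fun n : ℕ => gammaLB (b + n) - gammaLB (a + n)) atTop (nhds 0) := by
  have hb : 0 < b := ha.trans hab
  have h1 := (gammaUB_tail ha hab).add ((log_diff_tendsto b a).const_mul (1/2))
  norm_num at h1
  apply h1.congr
  intro n
  simp only [gammaLB, gammaUB]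
  ring

/-! Main theorem -/

/-- For `0 < a < b`,
`(b^(b−1)/a^(a−1))·e^(a−b) < Γ(b)/Γ(a) < (b^(b−1/2)/a^(a−1/2))·e^(a−b)`. -/
theorem gamma_ratio_strict_bounds (a b : ℝ) (ha : 0 < a) (hab : a < b) :
    b ^ (b - 1) / a ^ (a - 1) * Real.exp (a - b) < Real.Gamma b / Real.Gamma a ∧
    Real.Gamma b / Real.Gamma a < b ^ (b - 1 / 2) / a ^ (a - 1 / 2) * Real.exp (a - b) := by
  have hb : 0 < b := ha.trans hab
  have hΓa := Real.Gamma_pos_of_pos ha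
  have hΓb := Real.Gamma_pos_of_pos hb
  -- lower bound: gammaLB b - gammaLB a > 0
  have hcc : ccDec b < ccDec a :=
    ccDec_strictAnti (Set.mem_Ioi.mpr ha) (Set.mem_Ioi.mpr hb) hab
  have hlow : 0 < gammaLB b - gammaLB a := by
    have hev : ∀ᶠ n : ℕ in atTop,
        gammaLB (b + n) - gammaLB (a + n) ≤
          gammaLB b - gammaLB a + (ccDec b - ccDec a) := by
      filter_upwards [eventually_atTop.2 ⟨1, fun n hn => hn⟩] with n hn
      rw [gammaLB_add_nat hb n, gammaLB_add_nat ha n]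
      have hsum : ∑ k ∈ Finset.range n, ccDec (b + k) - ∑ k ∈ Finset.range n, ccDec (a + k)
          ≤ ccDec b - ccDec a := by
        rw [← Finset.sum_sub_distrib]
        have h0 : ∀ k ∈ Finset.range n, 0 ≤ -(ccDec (b + k) - ccDec (a + k)) := by
          intro k _
          have : ccDec (b + k) < ccDec (a + k) :=
            ccDec_strictAnti (Set.mem_Ioi.mpr (by positivity))
              (Set.mem_Ioi.mpr (by positivity)) (by linarith)
          linarith
        have := Finset.single_le_sum h0 (Finset.mem_range.mpr hn)
        rw [Finset.sum_neg_distrib] at this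
        simp only [Nat.cast_zero, add_zero] at this
        linarith
      linarith
    have h0 := le_of_tendsto (gammaLB_tail ha hab) hev
    linarith
  -- upper bound: gammaUB b - gammaUB a < 0
  have hdd : ddInc a < ddInc b :=
    ddInc_strictMono (Set.mem_Ioi.mpr ha) (Set.mem_Ioi.mpr hb) hab
  have hup : gammaUB b - gammaUB a < 0 := by
    have hev : ∀ᶠ n : ℕ in atTop,
        gammaUB b - gammaUB a + (ddInc b - ddInc a) ≤
          gammaUB (b + n) - gammaUB (a + n) := by
      filter_upwards [eventually_atTop.2 ⟨1, fun n hn => hn⟩] with n hn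
      rw [gammaUB_add_nat hb n, gammaUB_add_nat ha n]
      have hsum : ddInc b - ddInc a ≤
          ∑ k ∈ Finset.range n, ddInc (b + k) - ∑ k ∈ Finset.range n, ddInc (a + k) := by
        rw [← Finset.sum_sub_distrib]
        have h0 : ∀ k ∈ Finset.range n, 0 ≤ ddInc (b + k) - ddInc (a + k) := by
          intro k _
          have : ddInc (a + k) < ddInc (b + k) :=
            ddInc_strictMono (Set.mem_Ioi.mpr (by positivity))
              (Set.mem_Ioi.mpr (by positivity)) (by linarith)
          linarith
        have := Finset.single_le_sum h0 (Finset.mem_range.mpr hn)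
        simp only [Nat.cast_zero, add_zero] at this
        linarith
      linarith
    have h0 := ge_of_tendsto (gammaUB_tail ha hab) hev
    linarith
  constructor
  · have e1 : Real.Gamma b / Real.Gamma a =
        Real.exp (Real.log (Real.Gamma b) - Real.log (Real.Gamma a)) := by
      rw [Real.exp_sub, Real.exp_log hΓb, Real.exp_log hΓa]
    rw [e1, Real.rpow_def_of_pos hb, Real.rpow_def_of_pos ha, ← Real.exp_sub, ← Real.exp_add]
    apply Real.exp_lt_exp.mpr
    simp only [gammaLB] at hlow
    nlinarith [hlow]
  · have e1 : Real.Gamma b / Real.Gamma a =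
        Real.exp (Real.log (Real.Gamma b) - Real.log (Real.Gamma a)) := by
      rw [Real.exp_sub, Real.exp_log hΓb, Real.exp_log hΓa]
    rw [e1, Real.rpow_def_of_pos hb, Real.rpow_def_of_pos ha, ← Real.exp_sub, ← Real.exp_add]
    apply Real.exp_lt_exp.mpr
    simp only [gammaUB] at hup
    nlinarith [hup]
end

section
/- Let x, y be positive real numbers. Then ((x+y)/2)^{x+y} / (x^x·y^y) ≤ Γ((x+y+2)/2)² / (Γ(x+1)·Γ(y+1)) ≤ ((x+y)/2)^{x+y+1} / (x^{x+1/2}·y^{y+1/2}), where Γ is the Euler gamma function. -/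
open Real Filter Finset Set Topology

lemma hasDerivAt_logdiff {t : ℝ} (ht : 0 < t) :
    HasDerivAt (fun s : ℝ => log (s + 1) - log s) (1/(t+1) - 1/t) t := by
  have h1 : HasDerivAt (fun s : ℝ => log (s + 1)) (1/(t+1)) t := by
    simpa using ((hasDerivAt_id t).add_const 1).log (by positivity)
  have h2 : HasDerivAt (fun s : ℝ => log s) (1/t) t := by
    simpa [one_div] using Real.hasDerivAt_log ht.ne'
  exact h1.sub h2

lemma hasDerivAt_invdiff {t : ℝ} (ht : 0 < t) :
    HasDerivAt (fun s : ℝ => 1/(s+1) - 1/s) (1/t^2 - 1/(t+1)^2) t := by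
  have h1 : HasDerivAt (fun s : ℝ => 1/(s+1)) (-(1/(t+1)^2)) t := by
    have := ((hasDerivAt_id t).add_const 1).inv (by positivity : t + 1 ≠ 0)
    simpa [one_div, neg_div, id_eq, Pi.inv_def] using this
  have h2 : HasDerivAt (fun s : ℝ => 1/s) (-(1/t^2)) t := by
    have := hasDerivAt_inv ht.ne'
    simpa [one_div] using this
  have := h1.sub h2
  refine this.congr_deriv ?_
  ring

lemma concave_f1 : ConcaveOn ℝ (Ioi (0:ℝ)) (fun t => t * (log (t+1) - log t)) := by
  apply concaveOn_of_hasDerivWithinAt2_nonpos (convex_Ioi 0)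
    (f' := fun t => (log (t+1) - log t) + t * (1/(t+1) - 1/t))
    (f'' := fun t => 2 * (1/(t+1) - 1/t) + t * (1/t^2 - 1/(t+1)^2))
  · intro t ht
    exact (((hasDerivAt_id t).mul (hasDerivAt_logdiff ht)).continuousAt.continuousWithinAt)
  · rw [interior_Ioi]
    intro t ht
    have H := (hasDerivAt_id t).mul (hasDerivAt_logdiff ht)
    simp only [id_eq] at H
    refine (H.hasDerivWithinAt).congr_deriv ?_
    ring
  · rw [interior_Ioi]
    intro t ht
    have H := (hasDerivAt_logdiff ht).add ((hasDerivAt_id t).mul (hasDerivAt_invdiff ht))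
    simp only [id_eq] at H
    refine (H.hasDerivWithinAt).congr_deriv ?_
    ring
  · rw [interior_Ioi]
    intro t ht
    have h0 : (0:ℝ) < t := ht
    have key : 2 * (1/(t+1) - 1/t) + t * (1/t^2 - 1/(t+1)^2) = -(1/(t*(t+1)^2)) := by
      field_simp
      ring
    rw [key, neg_nonpos]
    positivity

lemma convex_f3 : ConvexOn ℝ (Ioi (0:ℝ)) (fun t => (t + 1/2) * (log (t+1) - log t)) := by
  apply convexOn_of_hasDerivWithinAt2_nonneg (convex_Ioi 0)
    (f' := fun t => (log (t+1) - log t) + (t + 1/2) * (1/(t+1) - 1/t))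
    (f'' := fun t => 2 * (1/(t+1) - 1/t) + (t + 1/2) * (1/t^2 - 1/(t+1)^2))
  · intro t ht
    exact ((((hasDerivAt_id t).add_const (1/2)).mul
      (hasDerivAt_logdiff ht)).continuousAt.continuousWithinAt)
  · rw [interior_Ioi]
    intro t ht
    have H := ((hasDerivAt_id t).add_const (1/2)).mul (hasDerivAt_logdiff ht)
    simp only [id_eq] at H
    refine (H.hasDerivWithinAt).congr_deriv ?_
    ring
  · rw [interior_Ioi]
    intro t ht
    have H := (hasDerivAt_logdiff ht).add
      (((hasDerivAt_id t).add_const (1/2)).mul (hasDerivAt_invdiff ht))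
    simp only [id_eq] at H
    refine (H.hasDerivWithinAt).congr_deriv ?_
    ring
  · rw [interior_Ioi]
    intro t ht
    have h0 : (0:ℝ) < t := ht
    have key : 2 * (1/(t+1) - 1/t) + (t + 1/2) * (1/t^2 - 1/(t+1)^2)
        = 1/(2*t^2*(t+1)^2) := by
      field_simp
      ring
    rw [key]
    positivity

lemma f1_mid {a b : ℝ} (ha : 0 < a) (hb : 0 < b) :
    a * (log (a+1) - log a) + b * (log (b+1) - log b)
      ≤ 2 * (((a+b)/2) * (log ((a+b)/2 + 1) - log ((a+b)/2))) := by
  have h := concave_f1.2 (mem_Ioi.mpr ha) (mem_Ioi.mpr hb)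
    (by norm_num : (0:ℝ) ≤ 1/2) (by norm_num : (0:ℝ) ≤ 1/2) (by norm_num)
  simp only [smul_eq_mul] at h
  have e : (1/2:ℝ) * a + (1/2) * b = (a+b)/2 := by ring
  rw [e] at h
  linarith

lemma f3_mid {a b : ℝ} (ha : 0 < a) (hb : 0 < b) :
    2 * ((((a+b)/2) + 1/2) * (log ((a+b)/2 + 1) - log ((a+b)/2)))
      ≤ (a + 1/2) * (log (a+1) - log a) + (b + 1/2) * (log (b+1) - log b) := by
  have h := convex_f3.2 (mem_Ioi.mpr ha) (mem_Ioi.mpr hb)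
    (by norm_num : (0:ℝ) ≤ 1/2) (by norm_num : (0:ℝ) ≤ 1/2) (by norm_num)
  simp only [smul_eq_mul] at h
  have e : (1/2:ℝ) * a + (1/2) * b = (a+b)/2 := by ring
  rw [e] at h
  linarith

lemma tlogt_mid {a b : ℝ} (ha : 0 ≤ a) (hb : 0 ≤ b) :
    2 * (((a+b)/2) * log ((a+b)/2)) ≤ a * log a + b * log b := by
  have h := convexOn_mul_log.2 (mem_Ici.mpr ha) (mem_Ici.mpr hb)
    (by norm_num : (0:ℝ) ≤ 1/2) (by norm_num : (0:ℝ) ≤ 1/2) (by norm_num)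
  simp only [smul_eq_mul] at h
  have e : (1/2:ℝ) * a + (1/2) * b = (a+b)/2 := by ring
  rw [e] at h
  linarith

/-- helper limit: `(a+n+c) * (log (a+n) - log (b+n)) → a - b`. -/
lemma tendsto_part (c : ℝ) {a b : ℝ} (ha : 0 < a) (hb : 0 < b) :
    Tendsto (fun n : ℕ => (a + n + c) * (log (a + n) - log (b + n))) atTop (𝓝 (a - b)) := by
  set d : ℝ := a - b with hd
  have hbn : Tendsto (fun n : ℕ => b + (n:ℝ)) atTop atTop :=
    tendsto_atTop_add_const_left _ b tendsto_natCast_atTop_atTop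
  have h1 : Tendsto (fun n : ℕ => (b + n) * log (1 + d / (b + n))) atTop (𝓝 d) :=
    (Real.tendsto_mul_log_one_add_div_atTop d).comp hbn
  have h2 : Tendsto (fun n : ℕ => 1 + (d + c) / (b + n)) atTop (𝓝 1) := by
    have := Tendsto.div_atTop (tendsto_const_nhds : Tendsto (fun _ : ℕ => d + c) atTop (𝓝 (d+c))) hbn
    simpa using (tendsto_const_nhds.add this : Tendsto (fun n : ℕ => 1 + (d + c) / (b + n)) atTop (𝓝 (1 + 0)))
  have h3 := h2.mul h1
  rw [one_mul] at h3
  refine h3.congr (fun n => ?_)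
  have hbn' : (0:ℝ) < b + n := by positivity
  have han' : (0:ℝ) < a + n := by positivity
  have e1 : 1 + d / (b + n) = (a + n) / (b + n) := by field_simp [hd]; ring
  rw [e1, Real.log_div han'.ne' hbn'.ne']
  field_simp
  ring

/-- Gurland-ratio bounds: for `x, y > 0`,
`((x+y)/2)^(x+y)/(x^x y^y) ≤ Γ((x+y+2)/2)²/(Γ(x+1)Γ(y+1)) ≤ ((x+y)/2)^(x+y+1)/(x^(x+1/2) y^(y+1/2))`. -/
theorem gurland_ratio_bounds (x y : ℝ) (hx : 0 < x) (hy : 0 < y) :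
    ((x + y) / 2) ^ (x + y) / (x ^ x * y ^ y)
        ≤ (Real.Gamma ((x + y + 2) / 2)) ^ 2 / (Real.Gamma (x + 1) * Real.Gamma (y + 1)) ∧
    (Real.Gamma ((x + y + 2) / 2)) ^ 2 / (Real.Gamma (x + 1) * Real.Gamma (y + 1))
        ≤ ((x + y) / 2) ^ (x + y + 1) / (x ^ (x + 1 / 2) * y ^ (y + 1 / 2)) := by
  have hm : (0:ℝ) < (x + y) / 2 := by positivity
  set m : ℝ := (x + y) / 2 with hmdef
  have hxy : x + y = 2 * m := by rw [hmdef]; ring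
  have hme : (x + y + 2) / 2 = m + 1 := by rw [hmdef]; ring
  rw [hme]
  -- the sequence
  set A : ℕ → ℝ := fun k => 2 * log (m + 1 + k) - log (x + 1 + k) - log (y + 1 + k) with hA
  set S : ℕ → ℝ := fun n => ∑ k ∈ range (n + 1), A k with hSdef
  have hS : ∀ n : ℕ, S n = Real.BohrMollerup.logGammaSeq (x+1) n
      + Real.BohrMollerup.logGammaSeq (y+1) n - 2 * Real.BohrMollerup.logGammaSeq (m+1) n := by
    intro n
    simp only [hSdef, hA, Real.BohrMollerup.logGammaSeq]
    rw [Finset.sum_sub_distrib, Finset.sum_sub_distrib, ← Finset.mul_sum]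
    push_cast
    linear_combination (Real.log n) * hxy
  have hT : Tendsto S atTop
      (𝓝 (log (Gamma (x+1)) + log (Gamma (y+1)) - 2 * log (Gamma (m+1)))) := by
    have h1 := Real.BohrMollerup.tendsto_log_gamma (by linarith : (0:ℝ) < x + 1)
    have h2 := Real.BohrMollerup.tendsto_log_gamma (by linarith : (0:ℝ) < y + 1)
    have h3 := (Real.BohrMollerup.tendsto_log_gamma (by linarith : (0:ℝ) < m + 1)).const_mul (2:ℝ)
    exact Tendsto.congr (fun n => (hS n).symm) ((h1.add h2).sub h3)
  -- lower bound
  set Qf : ℕ → ℝ := fun j => (x+j) * log (x+j) + (y+j) * log (y+j) - 2 * ((m+j) * log (m+j))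
    with hQf
  have hQstep : ∀ k : ℕ, A k ≤ Qf k - Qf (k+1) := by
    intro k
    have hxk : (0:ℝ) < x + k := by positivity
    have hyk : (0:ℝ) < y + k := by positivity
    have hmid := f1_mid hxk hyk
    have e : (x + k + (y + k)) / 2 = m + k := by rw [hmdef]; ring
    rw [e] at hmid
    simp only [hA, hQf]
    push_cast
    ring_nf at hmid ⊢
    linarith [hmid]
  have hQpos : ∀ j : ℕ, 0 ≤ Qf j := by
    intro j
    have h := tlogt_mid (le_of_lt (by positivity : (0:ℝ) < x + j))
      (le_of_lt (by positivity : (0:ℝ) < y + j))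
    have e : (x + j + (y + j)) / 2 = m + j := by rw [hmdef]; ring
    rw [e] at h
    simp only [hQf]
    linarith
  have hSQ : ∀ n : ℕ, S n ≤ Qf 0 := by
    intro n
    have h1 : S n ≤ ∑ k ∈ range (n+1), (Qf k - Qf (k+1)) :=
      Finset.sum_le_sum (fun k _ => hQstep k)
    rw [Finset.sum_range_sub'] at h1
    have := hQpos (n+1)
    linarith
  have lower : log (Gamma (x+1)) + log (Gamma (y+1)) - 2 * log (Gamma (m+1)) ≤ Qf 0 :=
    le_of_tendsto' hT hSQ
  -- upper bound
  set Rf : ℕ → ℝ := fun j => (x+j+1/2) * log (x+j) + (y+j+1/2) * log (y+j)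
      - 2 * ((m+j+1/2) * log (m+j)) with hRf
  have hRstep : ∀ k : ℕ, Rf k - Rf (k+1) ≤ A k := by
    intro k
    have hxk : (0:ℝ) < x + k := by positivity
    have hyk : (0:ℝ) < y + k := by positivity
    have hmid := f3_mid hxk hyk
    have e : (x + k + (y + k)) / 2 = m + k := by rw [hmdef]; ring
    rw [e] at hmid
    simp only [hA, hRf]
    push_cast
    ring_nf at hmid ⊢
    linarith [hmid]
  have hSR : ∀ n : ℕ, Rf 0 - Rf (n+1) ≤ S n := by
    intro n
    have h1 : ∑ k ∈ range (n+1), (Rf k - Rf (k+1)) ≤ S n :=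
      Finset.sum_le_sum (fun k _ => hRstep k)
    rwa [Finset.sum_range_sub'] at h1
  have hRtend : Tendsto Rf atTop (𝓝 0) := by
    have h1 := tendsto_part (1/2) hx hm
    have h2 := tendsto_part (1/2) hy hm
    have h3 := h1.add h2
    have e0 : (x - m) + (y - m) = 0 := by rw [hmdef]; ring
    rw [e0] at h3
    refine h3.congr (fun n => ?_)
    simp only [hRf]
    linear_combination (Real.log (m + n)) * hxy
  have upper : Rf 0 ≤ log (Gamma (x+1)) + log (Gamma (y+1)) - 2 * log (Gamma (m+1)) := by
    have hL : Tendsto (fun n : ℕ => Rf 0 - Rf (n+1)) atTop (𝓝 (Rf 0 - 0)) :=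
      tendsto_const_nhds.sub (hRtend.comp (tendsto_add_atTop_nat 1))
    rw [sub_zero] at hL
    exact le_of_tendsto_of_tendsto' hL hT hSR
  -- convert to the statement
  have hGx : 0 < Gamma (x+1) := Gamma_pos_of_pos (by linarith)
  have hGy : 0 < Gamma (y+1) := Gamma_pos_of_pos (by linarith)
  have hGm : 0 < Gamma (m+1) := Gamma_pos_of_pos (by linarith)
  have eG : Gamma (m+1)^2 / (Gamma (x+1) * Gamma (y+1))
      = exp (2 * log (Gamma (m+1)) - log (Gamma (x+1)) - log (Gamma (y+1))) := by
    rw [exp_sub, exp_sub, exp_log hGx, exp_log hGy, two_mul, exp_add, exp_log hGm]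
    ring
  constructor
  · have e1 : m ^ (x+y) / (x ^ x * y ^ y)
        = exp ((x+y) * log m - x * log x - y * log y) := by
      rw [exp_sub, exp_sub, rpow_def_of_pos hm, rpow_def_of_pos hx, rpow_def_of_pos hy]
      ring_nf
    rw [e1, eG, exp_le_exp]
    have hQ0 : Qf 0 = x * log x + y * log y - 2 * (m * log m) := by
      simp only [hQf]; norm_num
    rw [hQ0] at lower
    have e3 : (x + y) * log m = 2 * (m * log m) := by
      rw [hxy]; ring
    linarith [lower, e3.le, e3.ge]
  · have e2 : m ^ (x+y+1) / (x ^ (x+1/2) * y ^ (y+1/2))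
        = exp ((x+y+1) * log m - (x+1/2) * log x - (y+1/2) * log y) := by
      rw [exp_sub, exp_sub, rpow_def_of_pos hm, rpow_def_of_pos hx, rpow_def_of_pos hy]
      ring_nf
    rw [e2, eG, exp_le_exp]
    have hR0 : Rf 0 = (x+1/2) * log x + (y+1/2) * log y - 2 * ((m+1/2) * log m) := by
      simp only [hRf]; norm_num
    rw [hR0] at upper
    have e3 : (x + y + 1) * log m = 2 * ((m + 1/2) * log m) := by
      rw [hxy]; ring
    linarith [upper, e3.le, e3.ge]
end
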